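/- arXiv:1910.11403 — 4 statements merged into one kernel-verified Lean document; each statement's English description precedes it below -/
import Mathlib

section
/- Let X be a compact Hausdorff space. The family C_X of closed B-convex subsets of M_∪X (the space of possibility capacities on X) is a normal convexity: for any two disjoint sets A, D ∈ C_X there exist S₁, S₂ ∈ C_X with S₁ ∪ S₂ = M_∪X, A ∩ S₂ = ∅, and D ∩ S₁ = ∅. -/
open Set

/-- A continuous triangular norm on `[0,1]`, modeled as a binary operation on `ℝ`
restricted to the unit interval. -/
structure Tnorm where
  op : ℝ → ℝ → ℝ
  mem' : ∀ a b : ℝ, a ∈ Set.Icc (0:ℝ) 1 → b ∈ Set.Icc (0:ℝ) 1 → op a b ∈ Set.Icc (0:ℝ) 1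
  comm' : ∀ a b : ℝ, op a b = op b a
  assoc' : ∀ a b c : ℝ, op (op a b) c = op a (op b c)
  mono' : ∀ a b c d : ℝ, a ≤ b → c ≤ d → op a c ≤ op b d
  one_id' : ∀ a ∈ Set.Icc (0:ℝ) 1, op a 1 = a
  cont' : Continuous fun p : ℝ × ℝ => op p.1 p.2

/-- An upper-semicontinuous capacity on a topological space `X`. -/
structure Capacity (X : Type*) [TopologicalSpace X] where
  toFun : Set X → ℝ
  nonneg' : ∀ A : Set X, 0 ≤ toFun A
  le_one' : ∀ A : Set X, toFun A ≤ 1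
  empty' : toFun (∅ : Set X) = 0
  univ' : toFun (Set.univ : Set X) = 1
  mono' : ∀ A B : Set X, A ⊆ B → toFun A ≤ toFun B
  usc' : ∀ F : Set X, IsClosed F → ∀ a : ℝ, toFun F < a →
    ∃ O : Set X, IsOpen O ∧ F ⊆ O ∧ ∀ B : Set X, B ⊆ O → IsCompact B → toFun B < a

/-- Two functions are comonotone (equiordered). -/
def Comonotone {X : Type*} (φ ψ : X → ℝ) : Prop :=
  ∀ x₁ x₂ : X, 0 ≤ (φ x₁ - φ x₂) * (ψ x₁ - ψ x₂)

/-- A possibility capacity: maxitive on closed sets. -/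
def IsPossibility {X : Type*} [TopologicalSpace X] (ν : Capacity X) : Prop :=
  ∀ A B : Set X, IsClosed A → IsClosed B →
    ν.toFun (A ∪ B) = max (ν.toFun A) (ν.toFun B)

/-- Extension of a capacity to (open) sets: `ν(U) = sup{ν(K) : K closed, K ⊆ U}`. -/
noncomputable def capOpen {X : Type*} [TopologicalSpace X] (ν : Capacity X) (U : Set X) : ℝ :=
  sSup (ν.toFun '' {K : Set X | IsClosed K ∧ K ⊆ U})

/-- The topology on the space of capacities, generated by the subbasis
`O₋(F,a) = {ν : ν(F) < a}` (`F` closed) and `O₊(U,a) = {ν : ν(U) > a}` (`U` open). -/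
instance capacityTop (X : Type*) [TopologicalSpace X] : TopologicalSpace (Capacity X) :=
  TopologicalSpace.generateFrom
    {S : Set (Capacity X) |
      (∃ F : Set X, ∃ a : ℝ, IsClosed F ∧ S = {ν : Capacity X | ν.toFun F < a}) ∨
      (∃ U : Set X, ∃ a : ℝ, IsOpen U ∧ S = {ν : Capacity X | a < capOpen ν U})}

/-- The space `M_∪X` of possibility capacities on `X`. -/
abbrev PosCap (X : Type*) [TopologicalSpace X] := {ν : Capacity X // IsPossibility ν}

/-- B-convexity in `M_∪X`: a set is B-convex if together with `ν, μ` it contains every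
possibility capacity that agrees on closed sets with `A ↦ s·ν(A) ∨ μ(A)`, for all `s ∈ [0,1]`. -/
def BConvexP {X : Type*} [TopologicalSpace X] (C : Set (PosCap X)) : Prop :=
  ∀ ν ∈ C, ∀ μ ∈ C, ∀ s ∈ Set.Icc (0:ℝ) 1, ∀ κ : PosCap X,
    (∀ A : Set X, IsClosed A →
      κ.1.toFun A = max (s * ν.1.toFun A) (μ.1.toFun A)) → κ ∈ C

namespace BNormal

open TopologicalSpace

variable {X : Type*} [TopologicalSpace X]

/-! ### Basic lemmas about capacities and `capOpen` -/

lemma cap_nonneg (ν : Capacity X) (B : Set X) : 0 ≤ ν.toFun B := ν.nonneg' B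
lemma cap_le_one (ν : Capacity X) (B : Set X) : ν.toFun B ≤ 1 := ν.le_one' B

lemma capOpen_bddAbove (ν : Capacity X) (U : Set X) :
    BddAbove (ν.toFun '' {K : Set X | IsClosed K ∧ K ⊆ U}) := by
  refine ⟨1, ?_⟩
  rintro x ⟨K, -, rfl⟩
  exact ν.le_one' K

lemma capOpen_nonneg (ν : Capacity X) (U : Set X) : 0 ≤ capOpen ν U := by
  refine Real.sSup_nonneg ?_
  rintro x ⟨K, -, rfl⟩
  exact ν.nonneg' K

lemma capOpen_le_one (ν : Capacity X) (U : Set X) : capOpen ν U ≤ 1 := by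
  refine Real.sSup_le ?_ zero_le_one
  rintro x ⟨K, -, rfl⟩
  exact ν.le_one' K

lemma le_capOpen (ν : Capacity X) {K U : Set X} (hK : IsClosed K) (hKU : K ⊆ U) :
    ν.toFun K ≤ capOpen ν U :=
  le_csSup (capOpen_bddAbove ν U) ⟨K, ⟨hK, hKU⟩, rfl⟩

lemma capOpen_le (ν : Capacity X) {U : Set X} {c : ℝ} (hc : 0 ≤ c)
    (h : ∀ K : Set X, IsClosed K → K ⊆ U → ν.toFun K ≤ c) : capOpen ν U ≤ c := by
  refine Real.sSup_le ?_ hc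
  rintro x ⟨K, ⟨hK, hKU⟩, rfl⟩
  exact h K hK hKU

lemma capOpen_le_closure (ν : Capacity X) (U : Set X) :
    capOpen ν U ≤ ν.toFun (closure U) :=
  capOpen_le ν (ν.nonneg' _) fun K _ hKU =>
    ν.mono' _ _ (hKU.trans subset_closure)

/-- `capOpen` only depends on the values on closed sets. -/
lemma capOpen_congr {ν ν' : Capacity X} (U : Set X)
    (h : ∀ F : Set X, IsClosed F → ν.toFun F = ν'.toFun F) :
    capOpen ν U = capOpen ν' U := by
  unfold capOpen
  congr 1
  ext x
  constructor
  · rintro ⟨K, hK, rfl⟩; exact ⟨K, hK, (h K hK.1).symm⟩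
  · rintro ⟨K, hK, rfl⟩; exact ⟨K, hK, h K hK.1⟩

/-! ### The canonical join `s ⊙ ν ∨ μ` -/

/-- The canonical capacity realizing `B ↦ max (s·ν(B)) (μ(B))`. -/
def pjoinCap (s : ℝ) (hs : s ∈ Set.Icc (0:ℝ) 1) (ν μ : Capacity X) : Capacity X where
  toFun B := max (s * ν.toFun B) (μ.toFun B)
  nonneg' B := le_trans (μ.nonneg' B) (le_max_right _ _)
  le_one' B := max_le
    (le_trans (mul_le_mul hs.2 (ν.le_one' B) (ν.nonneg' B) zero_le_one) (by norm_num))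
    (μ.le_one' B)
  empty' := by
    show max (s * ν.toFun ∅) (μ.toFun ∅) = 0
    rw [ν.empty', μ.empty', mul_zero, max_self]
  univ' := by
    show max (s * ν.toFun Set.univ) (μ.toFun Set.univ) = 1
    rw [ν.univ', μ.univ', mul_one]
    exact max_eq_right hs.2
  mono' A B hAB := max_le_max
    (mul_le_mul_of_nonneg_left (ν.mono' A B hAB) hs.1) (μ.mono' A B hAB)
  usc' := by
    intro F hF a ha
    replace ha : max (s * ν.toFun F) (μ.toFun F) < a := ha
    have hμF : μ.toFun F < a := lt_of_le_of_lt (le_max_right _ _) ha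
    have ha0 : 0 < a := lt_of_le_of_lt (μ.nonneg' F) hμF
    obtain ⟨O₂, hO₂o, hFO₂, hO₂⟩ := μ.usc' F hF a hμF
    rcases eq_or_lt_of_le hs.1 with hs0 | hs0
    · refine ⟨O₂, hO₂o, hFO₂, ?_⟩
      intro B hB hBc
      show max (s * ν.toFun B) (μ.toFun B) < a
      have h0 : s * ν.toFun B = 0 := by rw [← hs0, zero_mul]
      rw [h0]
      exact max_lt ha0 (hO₂ B hB hBc)
    · have hν : ν.toFun F < a / s := by
        rw [lt_div_iff₀ hs0, mul_comm]
        exact lt_of_le_of_lt (le_max_left _ _) ha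
      obtain ⟨O₁, hO₁o, hFO₁, hO₁⟩ := ν.usc' F hF (a / s) hν
      refine ⟨O₁ ∩ O₂, hO₁o.inter hO₂o, subset_inter hFO₁ hFO₂, ?_⟩
      intro B hB hBc
      show max (s * ν.toFun B) (μ.toFun B) < a
      have h1 : s * ν.toFun B < a := by
        have := hO₁ B (hB.trans inter_subset_left) hBc
        calc s * ν.toFun B < s * (a / s) :=
              mul_lt_mul_of_pos_left this hs0
          _ = a := mul_div_cancel₀ a (ne_of_gt hs0)
      exact max_lt h1 (hO₂ B (hB.trans inter_subset_right) hBc)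

lemma pjoinCap_toFun (s : ℝ) (hs : s ∈ Set.Icc (0:ℝ) 1) (ν μ : Capacity X) (B : Set X) :
    (pjoinCap s hs ν μ).toFun B = max (s * ν.toFun B) (μ.toFun B) := rfl

/-- The canonical join of possibility capacities. -/
def pjoin (s : ℝ) (hs : s ∈ Set.Icc (0:ℝ) 1) (ν μ : PosCap X) : PosCap X :=
  ⟨pjoinCap s hs ν.1 μ.1, by
    intro A B hA hB
    show max (s * ν.1.toFun (A ∪ B)) (μ.1.toFun (A ∪ B)) =
      max (max (s * ν.1.toFun A) (μ.1.toFun A)) (max (s * ν.1.toFun B) (μ.1.toFun B))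
    rw [ν.2 A B hA hB, μ.2 A B hA hB, mul_max_of_nonneg _ _ hs.1, max_max_max_comm]⟩

lemma pjoin_toFun (s : ℝ) (hs : s ∈ Set.Icc (0:ℝ) 1) (ν μ : PosCap X) (B : Set X) :
    (pjoin s hs ν μ).1.toFun B = max (s * ν.1.toFun B) (μ.1.toFun B) := rfl

lemma capOpen_pjoin (s : ℝ) (hs : s ∈ Set.Icc (0:ℝ) 1) (ν μ : PosCap X) (U : Set X) :
    capOpen (pjoin s hs ν μ).1 U = max (s * capOpen ν.1 U) (capOpen μ.1 U) := by
  apply le_antisymm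
  · refine capOpen_le _ (le_trans (capOpen_nonneg μ.1 U) (le_max_right _ _)) ?_
    intro K hK hKU
    rw [pjoin_toFun]
    exact max_le_max (mul_le_mul_of_nonneg_left (le_capOpen ν.1 hK hKU) hs.1)
      (le_capOpen μ.1 hK hKU)
  · refine max_le ?_ ?_
    · rcases eq_or_lt_of_le hs.1 with hs0 | hs0
      · have h0 : s * capOpen ν.1 U = 0 := by rw [← hs0, zero_mul]
        rw [h0]; exact capOpen_nonneg _ U
      · have : capOpen ν.1 U ≤ capOpen (pjoin s hs ν μ).1 U / s := by
          refine capOpen_le _ (div_nonneg (capOpen_nonneg _ U) hs.1) ?_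
          intro K hK hKU
          rw [le_div_iff₀ hs0]
          calc ν.1.toFun K * s = s * ν.1.toFun K := mul_comm _ _
            _ ≤ max (s * ν.1.toFun K) (μ.1.toFun K) := le_max_left _ _
            _ ≤ _ := by
                have h := le_capOpen (pjoin s hs ν μ).1 hK hKU
                rw [pjoin_toFun] at h; exact h
        calc s * capOpen ν.1 U ≤ s * (capOpen (pjoin s hs ν μ).1 U / s) :=
              mul_le_mul_of_nonneg_left this (le_of_lt hs0)
          _ = _ := mul_div_cancel₀ _ (ne_of_gt hs0)
    · refine capOpen_le _ (capOpen_nonneg _ U) ?_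
      intro K hK hKU
      have h := le_capOpen (pjoin s hs ν μ).1 hK hKU
      rw [pjoin_toFun] at h
      exact le_trans (le_max_right (s * ν.1.toFun K) _) h

/-- agreement with a join on closed sets. -/
lemma capOpen_of_agree {s : ℝ} {hs : s ∈ Set.Icc (0:ℝ) 1} {ν μ κ : PosCap X}
    (h : ∀ F : Set X, IsClosed F → κ.1.toFun F = max (s * ν.1.toFun F) (μ.1.toFun F))
    (U : Set X) : capOpen κ.1 U = max (s * capOpen ν.1 U) (capOpen μ.1 U) := by
  rw [← capOpen_pjoin s hs ν μ U]
  exact capOpen_congr U (fun F hF => h F hF)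

/-! ### basic B-convexity lemmas -/

lemma join_mem {C : Set (PosCap X)} (hC : BConvexP C) {ν μ : PosCap X}
    (hν : ν ∈ C) (hμ : μ ∈ C) {s : ℝ} (hs : s ∈ Set.Icc (0:ℝ) 1) :
    pjoin s hs ν μ ∈ C :=
  hC ν hν μ hμ s hs _ (fun _ _ => rfl)

/-- B-convex sets are saturated for agreement on closed sets. -/
lemma mem_of_agree {C : Set (PosCap X)} (hC : BConvexP C) {ν κ : PosCap X}
    (hν : ν ∈ C) (h : ∀ F : Set X, IsClosed F → κ.1.toFun F = ν.1.toFun F) :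
    κ ∈ C := by
  refine hC ν hν ν hν 1 ⟨zero_le_one, le_refl 1⟩ κ ?_
  intro F hF
  rw [h F hF, one_mul, max_self]

lemma bconvex_univ : BConvexP (Set.univ : Set (PosCap X)) :=
  fun _ _ _ _ _ _ κ _ => Set.mem_univ κ

lemma bconvex_empty : BConvexP (∅ : Set (PosCap X)) :=
  fun _ h => absurd h (Set.notMem_empty _)

end BNormal
namespace BNormal

open TopologicalSpace Filter

variable {X : Type*} [TopologicalSpace X]

/-! ### Finite maxitivity -/

lemma toFun_biUnion_lt (κ : PosCap X) {ι : Type*} (t : Finset ι) (C : ι → Set X)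
    (hC : ∀ i ∈ t, IsClosed (C i)) {a : ℝ} (ha : 0 < a) (h : ∀ i ∈ t, κ.1.toFun (C i) < a) :
    κ.1.toFun (⋃ i ∈ t, C i) < a := by
  classical
  induction t using Finset.induction_on with
  | empty =>
    rw [show (⋃ i ∈ (∅ : Finset ι), C i) = (∅ : Set X) by simp, κ.1.empty']
    exact ha
  | @insert j t hj ih =>
    rw [Finset.set_biUnion_insert]
    have hclosed : IsClosed (⋃ i ∈ t, C i) :=
      Set.Finite.isClosed_biUnion t.finite_toSet (fun i hi => hC i (Finset.mem_insert_of_mem hi))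
    rw [κ.2 _ _ (hC j (Finset.mem_insert_self j t)) hclosed]
    exact max_lt (h j (Finset.mem_insert_self j t))
      (ih (fun i hi => hC i (Finset.mem_insert_of_mem hi))
        (fun i hi => h i (Finset.mem_insert_of_mem hi)))

/-- If a closed set is covered by finitely many opens on which `capOpen κ` is `< a`,
then `κ(F) < a`.  Uses the shrinking lemma. -/
lemma toFun_lt_of_cover [CompactSpace X] [T2Space X] (κ : PosCap X) {F : Set X}
    (hF : IsClosed F) {ι : Type*} [Finite ι] {U : ι → Set X} (hUo : ∀ i, IsOpen (U i))
    (hcov : F ⊆ ⋃ i, U i) {a : ℝ} (ha : 0 < a) (h : ∀ i, capOpen κ.1 (U i) < a) :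
    κ.1.toFun F < a := by
  classical
  haveI : Fintype ι := Fintype.ofFinite ι
  set V : Option ι → Set X := fun o => Option.elim o Fᶜ U with hV
  have hVo : ∀ o, IsOpen (V o) := by
    rintro (_ | i)
    · exact hF.isOpen_compl
    · exact hUo i
  have hVuniv : ⋃ o, V o = Set.univ := by
    apply Set.eq_univ_of_forall
    intro x
    by_cases hx : x ∈ F
    · obtain ⟨_, ⟨i, rfl⟩, hxi⟩ := hcov hx
      exact Set.mem_iUnion.mpr ⟨some i, hxi⟩
    · exact Set.mem_iUnion.mpr ⟨none, hx⟩
  obtain ⟨v, hvU, hvo, hvcl⟩ :=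
    exists_iUnion_eq_closure_subset hVo (fun x => Set.toFinite _) hVuniv
  have hFeq : F = ⋃ o ∈ (Finset.univ : Finset (Option ι)), (F ∩ closure (v o)) := by
    apply Set.Subset.antisymm
    · intro x hx
      have : x ∈ ⋃ o, v o := by rw [hvU]; exact Set.mem_univ x
      obtain ⟨_, ⟨o, rfl⟩, hxo⟩ := this
      exact Set.mem_biUnion (Finset.mem_univ o) ⟨hx, subset_closure hxo⟩
    · intro x hx
      obtain ⟨_, ⟨o, rfl⟩, hxo⟩ := hx
      simp only [Set.mem_iUnion] at hxo
      obtain ⟨-, hx2⟩ := hxo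
      exact hx2.1
  rw [hFeq]
  refine toFun_biUnion_lt κ _ _ (fun o _ => hF.inter isClosed_closure) ha ?_
  intro o _
  match o with
  | none =>
    have hsub : F ∩ closure (v none) ⊆ (∅ : Set X) := by
      intro x hx
      exact absurd (hvcl none hx.2) (by simpa [hV] using hx.1)
    calc κ.1.toFun (F ∩ closure (v none)) ≤ κ.1.toFun ∅ := κ.1.mono' _ _ hsub
      _ = 0 := κ.1.empty'
      _ < a := ha
  | some i =>
    have hsub : F ∩ closure (v (some i)) ⊆ U i := fun x hx => hvcl (some i) hx.2
    exact lt_of_le_of_lt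
      (le_capOpen κ.1 (hF.inter isClosed_closure) (fun x hx => hvcl (some i) hx.2)) (h i)

/-! ### Capacities from usc functions -/

lemma real_sSup_union {S T : Set ℝ} (hS : ∀ x ∈ S, 0 ≤ x ∧ x ≤ 1)
    (hT : ∀ x ∈ T, 0 ≤ x ∧ x ≤ 1) : sSup (S ∪ T) = max (sSup S) (sSup T) := by
  have hSb : BddAbove S := ⟨1, fun x hx => (hS x hx).2⟩
  have hTb : BddAbove T := ⟨1, fun x hx => (hT x hx).2⟩
  apply le_antisymm
  · refine Real.sSup_le ?_ ?_
    · rintro x (hx | hx)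
      · exact le_trans (le_csSup hSb hx) (le_max_left _ _)
      · exact le_trans (le_csSup hTb hx) (le_max_right _ _)
    · exact le_trans (Real.sSup_nonneg (fun x hx => (hS x hx).1)) (le_max_left _ _)
  · have hub : BddAbove (S ∪ T) := ⟨1, by rintro x (hx | hx); exacts [(hS x hx).2, (hT x hx).2]⟩
    have hun : ∀ x ∈ S ∪ T, 0 ≤ x := by rintro x (hx | hx); exacts [(hS x hx).1, (hT x hx).1]
    refine max_le ?_ ?_
    · rcases Set.eq_empty_or_nonempty S with rfl | hSne
      · rw [Real.sSup_empty]; exact Real.sSup_nonneg hun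
      · exact csSup_le_csSup hub hSne Set.subset_union_left
    · rcases Set.eq_empty_or_nonempty T with rfl | hTne
      · rw [Real.sSup_empty]; exact Real.sSup_nonneg hun
      · exact csSup_le_csSup hub hTne Set.subset_union_right

variable (g : X → ℝ)

/-- The "sup of `g`" capacity built from a usc function `g`. -/
noncomputable def supCap (hg0 : ∀ x, 0 ≤ g x) (hg1 : ∀ x, g x ≤ 1)
    (husc : ∀ a : ℝ, IsOpen {x | g x < a}) (hsup : sSup (g '' Set.univ) = 1) :
    Capacity X where
  toFun B := sSup (g '' B)
  nonneg' B := Real.sSup_nonneg (by rintro r ⟨x, -, rfl⟩; exact hg0 x)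
  le_one' B := Real.sSup_le (by rintro r ⟨x, -, rfl⟩; exact hg1 x) zero_le_one
  empty' := by show sSup (g '' ∅) = 0; rw [Set.image_empty, Real.sSup_empty]
  univ' := hsup
  mono' A B hAB := by
    show sSup (g '' A) ≤ sSup (g '' B)
    rcases Set.eq_empty_or_nonempty A with rfl | hAne
    · rw [Set.image_empty, Real.sSup_empty]
      exact Real.sSup_nonneg (by rintro r ⟨x, -, rfl⟩; exact hg0 x)
    · exact csSup_le_csSup ⟨1, by rintro r ⟨x, -, rfl⟩; exact hg1 x⟩
        (hAne.image g) (Set.image_mono hAB)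
  usc' := by
    intro F hF a ha
    replace ha : sSup (g '' F) < a := ha
    have h0 : 0 ≤ sSup (g '' F) := Real.sSup_nonneg (by rintro r ⟨x, -, rfl⟩; exact hg0 x)
    set a₁ := (sSup (g '' F) + a) / 2 with ha₁
    have h1 : sSup (g '' F) < a₁ := by rw [ha₁]; linarith
    have h2 : a₁ < a := by rw [ha₁]; linarith
    have h3 : 0 < a₁ := by rw [ha₁]; linarith
    refine ⟨{x | g x < a₁}, husc a₁, ?_, ?_⟩
    · intro x hx
      exact lt_of_le_of_lt (le_csSup ⟨1, by rintro r ⟨y, -, rfl⟩; exact hg1 y⟩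
        (Set.mem_image_of_mem g hx)) h1
    · intro B hB _
      show sSup (g '' B) < a
      refine lt_of_le_of_lt (Real.sSup_le ?_ (le_of_lt h3)) h2
      rintro r ⟨x, hx, rfl⟩
      exact le_of_lt (hB hx)

lemma supCap_poss (hg0 : ∀ x, 0 ≤ g x) (hg1 : ∀ x, g x ≤ 1)
    (husc : ∀ a : ℝ, IsOpen {x | g x < a}) (hsup : sSup (g '' Set.univ) = 1) :
    IsPossibility (supCap g hg0 hg1 husc hsup) := by
  intro A B _ _
  show sSup (g '' (A ∪ B)) = max (sSup (g '' A)) (sSup (g '' B))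
  rw [Set.image_union]
  exact real_sSup_union (by rintro r ⟨x, -, rfl⟩; exact ⟨hg0 x, hg1 x⟩)
    (by rintro r ⟨x, -, rfl⟩; exact ⟨hg0 x, hg1 x⟩)

end BNormal
namespace BNormal

open TopologicalSpace Filter

variable {X : Type*} [TopologicalSpace X]

/-- The subbasis generating the topology on `Capacity X`. -/
def SB (X : Type*) [TopologicalSpace X] : Set (Set (Capacity X)) :=
  {S : Set (Capacity X) |
    (∃ F : Set X, ∃ a : ℝ, IsClosed F ∧ S = {ν : Capacity X | ν.toFun F < a}) ∨
    (∃ U : Set X, ∃ a : ℝ, IsOpen U ∧ S = {ν : Capacity X | a < capOpen ν U})}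

lemma capTop_eq : (capacityTop X) = TopologicalSpace.generateFrom (SB X) := rfl

lemma nhds_cap (ν : Capacity X) :
    nhds ν = ⨅ s ∈ {t | ν ∈ t ∧ t ∈ SB X}, Filter.principal s :=
  TopologicalSpace.nhds_generateFrom

lemma isOpen_SB {s : Set (Capacity X)} (hs : s ∈ SB X) : IsOpen s :=
  TopologicalSpace.isOpen_generateFrom_of_mem hs

lemma isOpen_lt_closed {F : Set X} (hF : IsClosed F) (a : ℝ) :
    IsOpen {κ : PosCap X | κ.1.toFun F < a} :=
  (isOpen_SB (Or.inl ⟨F, a, hF, rfl⟩)).preimage continuous_subtype_val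

lemma isOpen_gt_open {U : Set X} (hU : IsOpen U) (b : ℝ) :
    IsOpen {κ : PosCap X | b < capOpen κ.1 U} :=
  (isOpen_SB (Or.inr ⟨U, b, hU, rfl⟩)).preimage continuous_subtype_val

/-! ### Compactness of the space of possibility capacities -/

instance posCapCompactSpace [CompactSpace X] [T2Space X] : CompactSpace (PosCap X) := by
  constructor
  rw [isCompact_iff_ultrafilter_le_nhds]
  intro 𝔘 _
  have hPne : Nonempty (PosCap X) := Filter.nonempty_of_neBot (𝔘 : Filter (PosCap X))
  have hXne : Nonempty X := by
    by_contra h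
    rw [not_nonempty_iff] at h
    obtain ⟨κ₀⟩ := hPne
    have h1 := κ₀.1.univ'
    rw [Set.univ_eq_empty_iff.mpr h, κ₀.1.empty'] at h1
    norm_num at h1
  -- ultrafilter limits of capOpen values
  have Hlim : ∀ U : Set X, ∃ l, l ∈ Set.Icc (0:ℝ) 1 ∧
      (Ultrafilter.map (fun κ : PosCap X => capOpen κ.1 U) 𝔘 : Filter ℝ) ≤ nhds l := by
    intro U
    have hc : (↑(Ultrafilter.map (fun κ : PosCap X => capOpen κ.1 U) 𝔘) : Filter ℝ) ≤
        Filter.principal (Set.Icc (0:ℝ) 1) := by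
      rw [Filter.le_principal_iff, Ultrafilter.coe_map, Filter.mem_map]
      have he : (fun κ : PosCap X => capOpen κ.1 U) ⁻¹' (Set.Icc 0 1) = Set.univ := by
        apply Set.eq_univ_of_forall
        intro κ
        exact ⟨capOpen_nonneg _ _, capOpen_le_one _ _⟩
      rw [he]; exact Filter.univ_mem
    obtain ⟨l, hl, hle⟩ := isCompact_Icc.ultrafilter_le_nhds _ hc
    exact ⟨l, hl, hle⟩
  choose ℓ hℓmem hℓlim using Hlim
  have Hlt : ∀ (U : Set X) (c : ℝ), ℓ U < c → {κ : PosCap X | capOpen κ.1 U < c} ∈ 𝔘 := by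
    intro U c hc
    have h1 : Set.Iio c ∈ nhds (ℓ U) := Iio_mem_nhds hc
    have h2 := Filter.le_def.mp (hℓlim U) _ h1
    rw [Ultrafilter.coe_map, Filter.mem_map] at h2
    exact h2
  have Hgt : ∀ (U : Set X) (c : ℝ), c < ℓ U → {κ : PosCap X | c < capOpen κ.1 U} ∈ 𝔘 := by
    intro U c hc
    have h1 : Set.Ioi c ∈ nhds (ℓ U) := Ioi_mem_nhds hc
    have h2 := Filter.le_def.mp (hℓlim U) _ h1
    rw [Ultrafilter.coe_map, Filter.mem_map] at h2
    exact h2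
  -- the limit function
  set gset : X → Set ℝ := fun x => (fun U => ℓ U) '' {U : Set X | IsOpen U ∧ x ∈ U} with hgsetdef
  set g : X → ℝ := fun x => sInf (gset x) with hgdef
  have hgsetne : ∀ x, (gset x).Nonempty :=
    fun x => ⟨ℓ Set.univ, ⟨Set.univ, ⟨isOpen_univ, Set.mem_univ x⟩, rfl⟩⟩
  have hgsetbdd : ∀ x, BddBelow (gset x) := by
    intro x
    refine ⟨0, ?_⟩
    rintro r ⟨U, hU, rfl⟩
    exact (hℓmem U).1
  have hgle : ∀ x (U : Set X), IsOpen U → x ∈ U → g x ≤ ℓ U :=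
    fun x U hU hx => csInf_le (hgsetbdd x) ⟨U, ⟨hU, hx⟩, rfl⟩
  have hg0 : ∀ x, 0 ≤ g x := by
    intro x
    refine Real.sInf_nonneg ?_
    rintro r ⟨U, hU, rfl⟩
    exact (hℓmem U).1
  have hg1 : ∀ x, g x ≤ 1 :=
    fun x => le_trans (hgle x Set.univ isOpen_univ (Set.mem_univ x)) (hℓmem Set.univ).2
  have husc : ∀ a : ℝ, IsOpen {x | g x < a} := by
    intro a
    rw [isOpen_iff_forall_mem_open]
    intro x hx
    have hx' : sInf (gset x) < a := hx
    obtain ⟨r, hrmem, hr⟩ := exists_lt_of_csInf_lt (hgsetne x) hx'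
    obtain ⟨U, ⟨hUo, hxU⟩, rfl⟩ := hrmem
    exact ⟨U, fun y hy => lt_of_le_of_lt (hgle y U hUo hy) hr, hUo, hxU⟩
  -- sup g = 1
  have hsup : sSup (g '' Set.univ) = 1 := by
    apply le_antisymm (Real.sSup_le (by rintro r ⟨x, -, rfl⟩; exact hg1 x) zero_le_one)
    by_contra hlt
    rw [not_le] at hlt
    set c := sSup (g '' Set.univ) with hcdef
    have hc0 : 0 ≤ c := Real.sSup_nonneg (by rintro r ⟨x, -, rfl⟩; exact hg0 x)
    set c' := (c + 1) / 2 with hc'def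
    have hcc' : c < c' := by rw [hc'def]; linarith
    have hc'1 : c' < 1 := by rw [hc'def]; linarith
    have hc'0 : 0 < c' := by rw [hc'def]; linarith
    have hx : ∀ x : X, ∃ U : Set X, IsOpen U ∧ x ∈ U ∧ ℓ U < c' := by
      intro x
      have hmem : g x ∈ g '' Set.univ := ⟨x, Set.mem_univ x, rfl⟩
      have hb : BddAbove (g '' Set.univ) := ⟨1, by rintro r ⟨y, -, rfl⟩; exact hg1 y⟩
      have hgx : g x < c' := lt_of_le_of_lt (hcdef ▸ le_csSup hb hmem) hcc'
      obtain ⟨r, hrmem, hr⟩ := exists_lt_of_csInf_lt (hgsetne x) hgx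
      obtain ⟨U, ⟨hUo, hxU⟩, rfl⟩ := hrmem
      exact ⟨U, hUo, hxU, hr⟩
    choose Ux hUxo hUxm hUxl using hx
    obtain ⟨t, ht⟩ := isCompact_univ.elim_finite_subcover Ux hUxo
      (fun x _ => Set.mem_iUnion.mpr ⟨x, hUxm x⟩)
    have hT : (⋂ x ∈ t, {κ : PosCap X | capOpen κ.1 (Ux x) < c'}) ∈ 𝔘 :=
      (Filter.biInter_mem t.finite_toSet).mpr (fun x _ => Hlt _ _ (hUxl x))
    obtain ⟨κ, hκ⟩ := Filter.nonempty_of_mem hT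
    simp only [Set.mem_iInter, Set.mem_setOf_eq] at hκ
    have hlt1 : κ.1.toFun Set.univ < c' := by
      refine toFun_lt_of_cover κ isClosed_univ (ι := {x // x ∈ t})
        (U := fun i => Ux i.1) (fun i => hUxo i.1) ?_ hc'0 (fun i => hκ i.1 i.2)
      intro x hx
      obtain ⟨_, ⟨y, rfl⟩, hy⟩ := ht (Set.mem_univ x)
      simp only [Set.mem_iUnion] at hy
      obtain ⟨hyt, hxy⟩ := hy
      exact Set.mem_iUnion.mpr ⟨⟨y, hyt⟩, hxy⟩
    rw [κ.1.univ'] at hlt1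
    linarith
  -- the limit capacity
  set νg : Capacity X := supCap g hg0 hg1 husc hsup with hνgdef
  have hposs : IsPossibility νg := supCap_poss g hg0 hg1 husc hsup
  refine ⟨⟨νg, hposs⟩, Set.mem_univ _, ?_⟩
  have hnhds : nhds (⟨νg, hposs⟩ : PosCap X) = Filter.comap Subtype.val (nhds νg) :=
    nhds_induced _ _
  rw [hnhds, ← Filter.map_le_iff_le_comap, nhds_cap]
  refine le_iInf₂ ?_
  rintro s ⟨hνs, (⟨F, a, hF, rfl⟩ | ⟨U, b, hU, rfl⟩)⟩
  · -- upper subbasic set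
    rw [Filter.le_principal_iff, Filter.mem_map]
    have hνF : sSup (g '' F) < a := hνs
    have h0 : 0 ≤ sSup (g '' F) := Real.sSup_nonneg (by rintro r ⟨x, -, rfl⟩; exact hg0 x)
    set a₁ := (sSup (g '' F) + a) / 2 with ha₁def
    have h1 : sSup (g '' F) < a₁ := by rw [ha₁def]; linarith
    have h2 : a₁ < a := by rw [ha₁def]; linarith
    have h3 : 0 < a₁ := by rw [ha₁def]; linarith
    have hpt : ∀ x : X, x ∈ F → ∃ U : Set X, IsOpen U ∧ x ∈ U ∧ ℓ U < a₁ := by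
      intro x hxF
      have hmem : g x ∈ g '' F := ⟨x, hxF, rfl⟩
      have hb : BddAbove (g '' F) := ⟨1, by rintro r ⟨y, -, rfl⟩; exact hg1 y⟩
      have hgx : g x < a₁ := lt_of_le_of_lt (le_csSup hb hmem) h1
      obtain ⟨r, hrmem, hr⟩ := exists_lt_of_csInf_lt (hgsetne x) hgx
      obtain ⟨U, ⟨hUo, hxU⟩, rfl⟩ := hrmem
      exact ⟨U, hUo, hxU, hr⟩
    have hpt' : ∀ x : F, ∃ U : Set X, IsOpen U ∧ (x : X) ∈ U ∧ ℓ U < a₁ :=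
      fun x => hpt x.1 x.2
    choose Ux hUxo hUxm hUxl using hpt'
    obtain ⟨t, ht⟩ := (hF.isCompact).elim_finite_subcover Ux hUxo
      (fun x hx => Set.mem_iUnion.mpr ⟨⟨x, hx⟩, hUxm ⟨x, hx⟩⟩)
    have hT : (⋂ i ∈ t, {κ : PosCap X | capOpen κ.1 (Ux i) < a₁}) ∈ 𝔘 :=
      (Filter.biInter_mem t.finite_toSet).mpr (fun i _ => Hlt _ _ (hUxl i))
    refine Filter.mem_of_superset hT ?_
    intro κ hκ
    simp only [Set.mem_iInter, Set.mem_setOf_eq] at hκ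
    show κ.1.toFun F < a
    refine lt_trans ?_ h2
    refine toFun_lt_of_cover κ hF (ι := {i // i ∈ t})
      (U := fun i => Ux i.1) (fun i => hUxo i.1) ?_ h3 (fun i => hκ i.1 i.2)
    intro x hx
    obtain ⟨_, ⟨y, rfl⟩, hy⟩ := ht hx
    simp only [Set.mem_iUnion] at hy
    obtain ⟨hyt, hxy⟩ := hy
    exact Set.mem_iUnion.mpr ⟨⟨y, hyt⟩, hxy⟩
  · -- lower subbasic set
    rw [Filter.le_principal_iff, Filter.mem_map]
    have hνU : b < capOpen νg U := hνs
    have hne : (νg.toFun '' {K : Set X | IsClosed K ∧ K ⊆ U}).Nonempty :=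
      ⟨νg.toFun ∅, ⟨∅, ⟨isClosed_empty, Set.empty_subset U⟩, rfl⟩⟩
    obtain ⟨r, hrmem, hbr⟩ := exists_lt_of_lt_csSup hne hνU
    obtain ⟨K, ⟨hK, hKU⟩, rfl⟩ := hrmem
    have hbℓ : b < ℓ U := by
      rcases Set.eq_empty_or_nonempty K with rfl | hKne
      · have : νg.toFun (∅ : Set X) = 0 := νg.empty'
        rw [this] at hbr
        exact lt_of_lt_of_le hbr (hℓmem U).1
      · have hbK : b < sSup (g '' K) := hbr
        obtain ⟨r', ⟨x, hxK, rfl⟩, hbx⟩ := exists_lt_of_lt_csSup (hKne.image g) hbK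
        exact lt_of_lt_of_le hbx (hgle x U hU (hKU hxK))
    exact Filter.mem_of_superset (Hgt U b hbℓ) (fun κ hκ => hκ)

end BNormal
namespace BNormal

open TopologicalSpace Filter

variable {X : Type*} [TopologicalSpace X]

/-! ### Thickenings -/

/-- Data for a thickening: a positive `δ` and a finite family of pairs `(K, U)`
with `K` closed, `U` open, `K ⊆ U`. -/
structure TData (X : Type*) [TopologicalSpace X] where
  δ : ℝ
  hδ : 0 < δ
  fam : Set (Set X × Set X)
  hfin : fam.Finite
  hcl : ∀ p ∈ fam, IsClosed p.1 ∧ IsOpen p.2 ∧ p.1 ⊆ p.2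

/-- The approximation relation induced by the data `R`. -/
def Rel (R : TData X) (ν κ : PosCap X) : Prop :=
  ∀ p ∈ R.fam, ν.1.toFun p.1 ≤ capOpen κ.1 p.2 + R.δ ∧ κ.1.toFun p.1 ≤ capOpen ν.1 p.2 + R.δ

/-- The thickening of a set of possibility capacities. -/
def Thick (R : TData X) (S : Set (PosCap X)) : Set (PosCap X) :=
  {κ | ∃ ν ∈ S, Rel R ν κ}

lemma thick_bconvex {R : TData X} {S : Set (PosCap X)} (hS : BConvexP S) :
    BConvexP (Thick R S) := by
  rintro κ₁ ⟨a₁, ha₁, hr₁⟩ κ₂ ⟨a₂, ha₂, hr₂⟩ s hs κ hκ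
  refine ⟨pjoin s hs a₁ a₂, join_mem hS ha₁ ha₂ hs, ?_⟩
  intro p hp
  have hsδ : s * R.δ ≤ R.δ := mul_le_of_le_one_left (le_of_lt R.hδ) hs.2
  have hcapκ : capOpen κ.1 p.2 = max (s * capOpen κ₁.1 p.2) (capOpen κ₂.1 p.2) :=
    capOpen_of_agree (hs := hs) hκ p.2
  constructor
  · rw [pjoin_toFun]
    calc max (s * a₁.1.toFun p.1) (a₂.1.toFun p.1)
        ≤ max (s * (capOpen κ₁.1 p.2 + R.δ)) (capOpen κ₂.1 p.2 + R.δ) :=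
          max_le_max (mul_le_mul_of_nonneg_left (hr₁ p hp).1 hs.1) (hr₂ p hp).1
      _ ≤ max (s * capOpen κ₁.1 p.2 + R.δ) (capOpen κ₂.1 p.2 + R.δ) := by
          refine max_le_max ?_ le_rfl
          have hexp : s * (capOpen κ₁.1 p.2 + R.δ) = s * capOpen κ₁.1 p.2 + s * R.δ := by ring
          rw [hexp]
          linarith
      _ = max (s * capOpen κ₁.1 p.2) (capOpen κ₂.1 p.2) + R.δ := max_add_add_right _ _ _
      _ = capOpen κ.1 p.2 + R.δ := by rw [hcapκ]
  · rw [hκ p.1 (R.hcl p hp).1]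
    calc max (s * κ₁.1.toFun p.1) (κ₂.1.toFun p.1)
        ≤ max (s * (capOpen a₁.1 p.2 + R.δ)) (capOpen a₂.1 p.2 + R.δ) :=
          max_le_max (mul_le_mul_of_nonneg_left (hr₁ p hp).2 hs.1) (hr₂ p hp).2
      _ ≤ max (s * capOpen a₁.1 p.2 + R.δ) (capOpen a₂.1 p.2 + R.δ) := by
          refine max_le_max ?_ le_rfl
          have hexp : s * (capOpen a₁.1 p.2 + R.δ) = s * capOpen a₁.1 p.2 + s * R.δ := by ring
          rw [hexp]
          linarith
      _ = max (s * capOpen a₁.1 p.2) (capOpen a₂.1 p.2) + R.δ := max_add_add_right _ _ _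
      _ = capOpen (pjoin s hs a₁ a₂).1 p.2 + R.δ := by rw [capOpen_pjoin]

lemma subset_interior_thick {R : TData X} {S : Set (PosCap X)} :
    S ⊆ interior (Thick R S) := by
  intro ν hν
  rw [mem_interior]
  refine ⟨⋂ p ∈ R.fam, ({κ : PosCap X | κ.1.toFun p.1 < capOpen ν.1 p.2 + R.δ} ∩
      {κ : PosCap X | ν.1.toFun p.1 - R.δ < capOpen κ.1 p.2}), ?_, ?_, ?_⟩
  · intro κ hκ
    simp only [Set.mem_iInter, Set.mem_inter_iff, Set.mem_setOf_eq] at hκ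
    refine ⟨ν, hν, ?_⟩
    intro p hp
    obtain ⟨h1, h2⟩ := hκ p hp
    exact ⟨by linarith, le_of_lt h1⟩
  · exact R.hfin.isOpen_biInter (fun p hp =>
      (isOpen_lt_closed (R.hcl p hp).1 _).inter (isOpen_gt_open (R.hcl p hp).2.1 _))
  · simp only [Set.mem_iInter, Set.mem_inter_iff, Set.mem_setOf_eq]
    intro p hp
    have hle := le_capOpen ν.1 (R.hcl p hp).1 (R.hcl p hp).2.2
    exact ⟨lt_of_le_of_lt hle (lt_add_of_pos_right _ R.hδ), by linarith [R.hδ]⟩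

/-! ### Existence of disjoint thickenings -/

/-- abstract one-sided comparison lemma -/
lemma key_le [CompactSpace X] [T2Space X] (νs μs : PosCap X)
    (hcl : ∀ (O₁ O₂ O₃ : Set X) (ε : ℝ), 0 < ε →
      IsOpen O₁ → IsOpen O₂ → IsOpen O₃ → closure O₁ ⊆ O₂ → closure O₂ ⊆ O₃ →
      ∃ ν μ : PosCap X,
        capOpen νs.1 O₁ - ε < capOpen ν.1 O₁ ∧
        μ.1.toFun (closure O₃) < μs.1.toFun (closure O₃) + ε ∧
        ν.1.toFun (closure O₁) ≤ μ.1.toFun (closure O₃) + 2 * ε) :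
    ∀ K : Set X, IsClosed K → νs.1.toFun K ≤ μs.1.toFun K := by
  intro K hK
  have hstep : ∀ ε : ℝ, 0 < ε → νs.1.toFun K ≤ μs.1.toFun K + 5 * ε := by
    intro ε hε
    obtain ⟨O₄, hO₄o, hKO₄, hO₄⟩ := μs.1.usc' K hK (μs.1.toFun K + ε)
      (lt_add_of_pos_right _ hε)
    obtain ⟨O₃, hO₃o, hKO₃, hclO₃⟩ := normal_exists_closure_subset hK hO₄o hKO₄
    obtain ⟨O₂, hO₂o, hKO₂, hclO₂⟩ := normal_exists_closure_subset hK hO₃o hKO₃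
    obtain ⟨O₁, hO₁o, hKO₁, hclO₁⟩ := normal_exists_closure_subset hK hO₂o hKO₂
    obtain ⟨ν, μ, h1, h2, h3⟩ := hcl O₁ O₂ O₃ ε hε hO₁o hO₂o hO₃o hclO₁ hclO₂
    have e1 : νs.1.toFun K ≤ capOpen νs.1 O₁ := le_capOpen _ hK hKO₁
    have e2 : capOpen ν.1 O₁ ≤ ν.1.toFun (closure O₁) := capOpen_le_closure _ _
    have e4 : μs.1.toFun (closure O₃) < μs.1.toFun K + ε :=
      hO₄ (closure O₃) hclO₃ isClosed_closure.isCompact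
    linarith
  refine le_of_forall_pos_le_add ?_
  intro ε hε
  have := hstep (ε / 5) (by linarith)
  linarith

/-- auxiliary thickening data associated to an interpolation chain -/
def mkR (O₁ O₂ O₃ : Set X) (ε : ℝ) (hε : 0 < ε) (hO₂o : IsOpen O₂) (hO₃o : IsOpen O₃)
    (hclO₁ : closure O₁ ⊆ O₂) (hclO₂ : closure O₂ ⊆ O₃) : TData X where
  δ := ε
  hδ := hε
  fam := {(closure O₁, O₂), (closure O₂, O₃)}
  hfin := (Set.finite_singleton _).insert _
  hcl := by
    rintro p (rfl | hp)
    · exact ⟨isClosed_closure, hO₂o, hclO₁⟩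
    · rw [Set.mem_singleton_iff] at hp
      subst hp
      exact ⟨isClosed_closure, hO₃o, hclO₂⟩

lemma mkR_fam_mem₁ (O₁ O₂ O₃ : Set X) (ε : ℝ) (hε : 0 < ε) (hO₂o : IsOpen O₂)
    (hO₃o : IsOpen O₃) (hclO₁ : closure O₁ ⊆ O₂) (hclO₂ : closure O₂ ⊆ O₃) :
    ((closure O₁, O₂) : Set X × Set X) ∈ (mkR O₁ O₂ O₃ ε hε hO₂o hO₃o hclO₁ hclO₂).fam :=
  Set.mem_insert _ _

lemma mkR_fam_mem₂ (O₁ O₂ O₃ : Set X) (ε : ℝ) (hε : 0 < ε) (hO₂o : IsOpen O₂)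
    (hO₃o : IsOpen O₃) (hclO₁ : closure O₁ ⊆ O₂) (hclO₂ : closure O₂ ⊆ O₃) :
    ((closure O₂, O₃) : Set X × Set X) ∈ (mkR O₁ O₂ O₃ ε hε hO₂o hO₃o hclO₁ hclO₂).fam :=
  Set.mem_insert_of_mem _ rfl

lemma exists_thick_disjoint [CompactSpace X] [T2Space X]
    {A D : Set (PosCap X)} (hA : IsClosed A) (hD : IsClosed D)
    (hAb : BConvexP A) (hDb : BConvexP D) (hdisj : Disjoint A D) :
    ∃ R : TData X, Disjoint (Thick R A) (Thick R D) := by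
  by_contra hcon
  push_neg at hcon
  set W : TData X → Set (PosCap X × PosCap X) := fun R =>
    {q | q.1 ∈ A ∧ q.2 ∈ D ∧ ∀ p ∈ R.fam, ∀ p' ∈ R.fam, p'.1 = closure p.2 →
      (q.1.1.toFun p.1 ≤ q.2.1.toFun (closure p'.2) + 2 * R.δ ∧
       q.2.1.toFun p.1 ≤ q.1.1.toFun (closure p'.2) + 2 * R.δ)} with hWdef
  have hWne : ∀ R : TData X, (W R).Nonempty := by
    intro R
    obtain ⟨κ, hκA, hκD⟩ := Set.not_disjoint_iff.mp (hcon R)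
    obtain ⟨ν, hνA, hrν⟩ := hκA
    obtain ⟨μ, hμD, hrμ⟩ := hκD
    refine ⟨(ν, μ), hνA, hμD, ?_⟩
    intro p hp p' hp' hpc
    have c1 : capOpen κ.1 p.2 ≤ κ.1.toFun p'.1 := by
      rw [hpc]; exact capOpen_le_closure _ _
    have c2 : capOpen ν.1 p'.2 ≤ ν.1.toFun (closure p'.2) := capOpen_le_closure _ _
    have c3 : capOpen μ.1 p'.2 ≤ μ.1.toFun (closure p'.2) := capOpen_le_closure _ _
    constructor
    · have d1 := (hrν p hp).1
      have d2 := (hrμ p' hp').2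
      linarith
    · have d1 := (hrμ p hp).1
      have d2 := (hrν p' hp').2
      linarith
  haveI : Nonempty (TData X) :=
    ⟨⟨1, one_pos, ∅, Set.finite_empty, fun p hp => absurd hp (Set.notMem_empty p)⟩⟩
  set Z : TData X → Set (PosCap X × PosCap X) := fun R => closure (W R) with hZdef
  have hZsub : ∀ R, Z R ⊆ A ×ˢ D :=
    fun R => closure_minimal (fun q hq => Set.mem_prod.mpr ⟨hq.1, hq.2.1⟩) (hA.prod hD)
  have hZne : ∀ R, (Z R).Nonempty := by
    intro R
    obtain ⟨q, hq⟩ := hWne R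
    exact ⟨q, subset_closure hq⟩
  have hZc : ∀ R, IsCompact (Z R) := fun R =>
    IsCompact.of_isClosed_subset (hA.isCompact.prod hD.isCompact) isClosed_closure (hZsub R)
  have hdir : Directed (fun x1 x2 : Set (PosCap X × PosCap X) => x1 ⊇ x2) Z := by
    intro R₁ R₂
    refine ⟨⟨min R₁.δ R₂.δ, lt_min R₁.hδ R₂.hδ, R₁.fam ∪ R₂.fam, R₁.hfin.union R₂.hfin,
      ?_⟩, ?_, ?_⟩
    · rintro p (hp | hp)
      exacts [R₁.hcl p hp, R₂.hcl p hp]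
    · apply closure_mono
      rintro q ⟨hqA, hqD, hq⟩
      refine ⟨hqA, hqD, ?_⟩
      intro p hp p' hp' hpc
      obtain ⟨h1, h2⟩ := hq p (Or.inl hp) p' (Or.inl hp') hpc
      have hmin : min R₁.δ R₂.δ ≤ R₁.δ := min_le_left _ _
      exact ⟨by linarith, by linarith⟩
    · apply closure_mono
      rintro q ⟨hqA, hqD, hq⟩
      refine ⟨hqA, hqD, ?_⟩
      intro p hp p' hp' hpc
      obtain ⟨h1, h2⟩ := hq p (Or.inr hp) p' (Or.inr hp') hpc
      have hmin : min R₁.δ R₂.δ ≤ R₂.δ := min_le_right _ _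
      exact ⟨by linarith, by linarith⟩
  obtain ⟨q, hq⟩ :=
    IsCompact.nonempty_iInter_of_directed_nonempty_isCompact_isClosed Z hdir hZne hZc
      (fun R => isClosed_closure)
  have hqZ : ∀ R, q ∈ Z R := fun R => Set.mem_iInter.mp hq R
  have hqAD : q ∈ A ×ˢ D := hZsub _ (hqZ (Classical.arbitrary _))
  have hle₁ : ∀ K : Set X, IsClosed K → q.1.1.toFun K ≤ q.2.1.toFun K := by
    refine key_le q.1 q.2 ?_
    intro O₁ O₂ O₃ ε hε hO₁o hO₂o hO₃o hclO₁ hclO₂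
    set R := mkR O₁ O₂ O₃ ε hε hO₂o hO₃o hclO₁ hclO₂ with hRdef
    have hqR : q ∈ closure (W R) := hqZ R
    set V : Set (PosCap X × PosCap X) :=
      {κ : PosCap X | capOpen q.1.1 O₁ - ε < capOpen κ.1 O₁} ×ˢ
      {κ : PosCap X | κ.1.toFun (closure O₃) < q.2.1.toFun (closure O₃) + ε} with hVdef
    have hVo : IsOpen V := (isOpen_gt_open hO₁o _).prod (isOpen_lt_closed isClosed_closure _)
    have hqV : q ∈ V := by
      rw [hVdef, Set.mem_prod]
      exact ⟨sub_lt_self _ hε, lt_add_of_pos_right _ hε⟩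
    obtain ⟨q', hq'V, hq'W⟩ := mem_closure_iff.mp hqR V hVo hqV
    have hVmem := Set.mem_prod.mp hq'V
    have hfammem₁ := mkR_fam_mem₁ O₁ O₂ O₃ ε hε hO₂o hO₃o hclO₁ hclO₂
    have hfammem₂ := mkR_fam_mem₂ O₁ O₂ O₃ ε hε hO₂o hO₃o hclO₁ hclO₂
    rw [← hRdef] at hfammem₁ hfammem₂
    have hclause := (hq'W.2.2 _ hfammem₁ _ hfammem₂ rfl).1
    have hRδ : R.δ = ε := rfl
    refine ⟨q'.1, q'.2, hVmem.1, hVmem.2, ?_⟩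
    rw [hRδ] at hclause
    exact hclause
  have hle₂ : ∀ K : Set X, IsClosed K → q.2.1.toFun K ≤ q.1.1.toFun K := by
    refine key_le q.2 q.1 ?_
    intro O₁ O₂ O₃ ε hε hO₁o hO₂o hO₃o hclO₁ hclO₂
    set R := mkR O₁ O₂ O₃ ε hε hO₂o hO₃o hclO₁ hclO₂ with hRdef
    have hqR : q ∈ closure (W R) := hqZ R
    set V : Set (PosCap X × PosCap X) :=
      {κ : PosCap X | κ.1.toFun (closure O₃) < q.1.1.toFun (closure O₃) + ε} ×ˢ
      {κ : PosCap X | capOpen q.2.1 O₁ - ε < capOpen κ.1 O₁} with hVdef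
    have hVo : IsOpen V := (isOpen_lt_closed isClosed_closure _).prod (isOpen_gt_open hO₁o _)
    have hqV : q ∈ V := by
      rw [hVdef, Set.mem_prod]
      exact ⟨lt_add_of_pos_right _ hε, sub_lt_self _ hε⟩
    obtain ⟨q', hq'V, hq'W⟩ := mem_closure_iff.mp hqR V hVo hqV
    have hVmem := Set.mem_prod.mp hq'V
    have hfammem₁ := mkR_fam_mem₁ O₁ O₂ O₃ ε hε hO₂o hO₃o hclO₁ hclO₂
    have hfammem₂ := mkR_fam_mem₂ O₁ O₂ O₃ ε hε hO₂o hO₃o hclO₁ hclO₂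
    rw [← hRdef] at hfammem₁ hfammem₂
    have hclause := (hq'W.2.2 _ hfammem₁ _ hfammem₂ rfl).2
    have hRδ : R.δ = ε := rfl
    refine ⟨q'.2, q'.1, hVmem.2, hVmem.1, ?_⟩
    rw [hRδ] at hclause
    exact hclause
  have hagree : ∀ F : Set X, IsClosed F → q.1.1.toFun F = q.2.1.toFun F :=
    fun F hF => le_antisymm (hle₁ F hF) (hle₂ F hF)
  have hq1D : q.1 ∈ D := mem_of_agree hDb (Set.mem_prod.mp hqAD).2 hagree
  exact Set.disjoint_left.mp hdisj (Set.mem_prod.mp hqAD).1 hq1D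

end BNormal
namespace BNormal

open TopologicalSpace

variable {X : Type*} [TopologicalSpace X]

lemma no_common {P Q : Set (PosCap X)} (hPQ : P ∩ Q = ∅) {z : PosCap X}
    (h1 : z ∈ P) (h2 : z ∈ Q) : False :=
  Set.eq_empty_iff_forall_notMem.mp hPQ z ⟨h1, h2⟩

/-- combining two scaled elements of a B-convex set into one. -/
lemma scale_join {C : Set (PosCap X)} (hC : BConvexP C) {c₁ c₂ : PosCap X}
    (h₁ : c₁ ∈ C) (h₂ : c₂ ∈ C) {S₁ S₂ : ℝ} (hS₁ : S₁ ∈ Set.Icc (0:ℝ) 1)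
    (hS₂ : S₂ ∈ Set.Icc (0:ℝ) 1) :
    ∃ c ∈ C, ∀ F : Set X, IsClosed F →
      max (S₁ * c₁.1.toFun F) (S₂ * c₂.1.toFun F) = max S₁ S₂ * c.1.toFun F := by
  rcases le_total S₁ S₂ with hle | hle
  · rcases eq_or_lt_of_le hS₂.1 with h0 | h0
    · refine ⟨c₂, h₂, ?_⟩
      intro F hF
      have hS₁0 : S₁ = 0 := le_antisymm (h0 ▸ hle) hS₁.1
      rw [hS₁0, ← h0]
      norm_num
    · have hρ : S₁ / S₂ ∈ Set.Icc (0:ℝ) 1 :=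
        ⟨div_nonneg hS₁.1 (le_of_lt h0), (div_le_one h0).mpr hle⟩
      refine ⟨pjoin (S₁ / S₂) hρ c₁ c₂, join_mem hC h₁ h₂ hρ, ?_⟩
      intro F hF
      rw [max_eq_right hle, pjoin_toFun, mul_max_of_nonneg _ _ hS₂.1, ← mul_assoc,
        mul_div_cancel₀ _ (ne_of_gt h0)]
  · rcases eq_or_lt_of_le hS₁.1 with h0 | h0
    · refine ⟨c₂, h₂, ?_⟩
      intro F hF
      have hS₂0 : S₂ = 0 := le_antisymm (h0 ▸ hle) hS₂.1
      rw [hS₂0, ← h0]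
      norm_num
    · have hρ : S₂ / S₁ ∈ Set.Icc (0:ℝ) 1 :=
        ⟨div_nonneg hS₂.1 (le_of_lt h0), (div_le_one h0).mpr hle⟩
      refine ⟨pjoin (S₂ / S₁) hρ c₂ c₁, join_mem hC h₂ h₁ hρ, ?_⟩
      intro F hF
      rw [max_eq_left hle, pjoin_toFun, mul_max_of_nonneg _ _ hS₁.1, ← mul_assoc,
        mul_div_cancel₀ _ (ne_of_gt h0), max_comm]

/-- The B-convex hull of `P ∪ {x}` (as a superset; it is B-convex and contains both). -/
def hullExt (P : Set (PosCap X)) (x : PosCap X) : Set (PosCap X) :=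
  {κ | ∃ c ∈ P, ∃ t σ : ℝ, t ∈ Set.Icc (0:ℝ) 1 ∧ σ ∈ Set.Icc (0:ℝ) 1 ∧ max t σ = 1 ∧
    ∀ F : Set X, IsClosed F → κ.1.toFun F = max (t * x.1.toFun F) (σ * c.1.toFun F)}

lemma subset_hullExt (P : Set (PosCap X)) (x : PosCap X) : P ⊆ hullExt P x := by
  intro c hc
  refine ⟨c, hc, 0, 1, ⟨le_refl 0, zero_le_one⟩, ⟨zero_le_one, le_refl 1⟩, by norm_num, ?_⟩
  intro F hF
  rw [zero_mul, one_mul]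
  exact (max_eq_right (c.1.nonneg' F)).symm

lemma mem_hullExt_self {P : Set (PosCap X)} (hPne : P.Nonempty) (x : PosCap X) :
    x ∈ hullExt P x := by
  obtain ⟨c₀, hc₀⟩ := hPne
  refine ⟨c₀, hc₀, 1, 0, ⟨zero_le_one, le_refl 1⟩, ⟨le_refl 0, zero_le_one⟩, by norm_num, ?_⟩
  intro F hF
  rw [one_mul, zero_mul]
  exact (max_eq_left (x.1.nonneg' F)).symm

lemma hullExt_bconvex {P : Set (PosCap X)} (hP : BConvexP P) (x : PosCap X) :
    BConvexP (hullExt P x) := by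
  rintro κ₁ ⟨c₁, hc₁, t₁, σ₁, ht₁, hσ₁, hm₁, hκ₁⟩ κ₂ ⟨c₂, hc₂, t₂, σ₂, ht₂, hσ₂, hm₂, hκ₂⟩
    s hs κ hκ
  have hsσ₁ : s * σ₁ ∈ Set.Icc (0:ℝ) 1 :=
    ⟨mul_nonneg hs.1 hσ₁.1, mul_le_one₀ hs.2 hσ₁.1 hσ₁.2⟩
  obtain ⟨c, hcC, hcprof⟩ := scale_join hP hc₁ hc₂ hsσ₁ hσ₂
  refine ⟨c, hcC, max (s * t₁) t₂, max (s * σ₁) σ₂,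
    ⟨le_trans ht₂.1 (le_max_right _ _),
      max_le (mul_le_one₀ hs.2 ht₁.1 ht₁.2) ht₂.2⟩,
    ⟨le_trans hσ₂.1 (le_max_right _ _),
      max_le (mul_le_one₀ hs.2 hσ₁.1 hσ₁.2) hσ₂.2⟩, ?_, ?_⟩
  · apply le_antisymm
    · exact max_le (max_le (mul_le_one₀ hs.2 ht₁.1 ht₁.2) ht₂.2)
        (max_le (mul_le_one₀ hs.2 hσ₁.1 hσ₁.2) hσ₂.2)
    · calc (1:ℝ) = max t₂ σ₂ := hm₂.symm
        _ ≤ _ := max_le_max (le_max_right _ _) (le_max_right _ _)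
  · intro F hF
    have hx0 := x.1.nonneg' F
    rw [hκ F hF, hκ₁ F hF, hκ₂ F hF, mul_max_of_nonneg _ _ hs.1, max_max_max_comm]
    have e2 : max (s * (t₁ * x.1.toFun F)) (t₂ * x.1.toFun F) =
        max (s * t₁) t₂ * x.1.toFun F := by
      rw [max_mul_of_nonneg _ _ hx0, mul_assoc]
    have e3 : max (s * (σ₁ * c₁.1.toFun F)) (σ₂ * c₂.1.toFun F) =
        max (s * σ₁) σ₂ * c.1.toFun F := by
      rw [← hcprof F hF, mul_assoc]
    rw [e2, e3]

/-- Main algebraic step: a maximal disjoint B-convex pair partitions the space. -/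
lemma partition_contradiction {P Q : Set (PosCap X)} (hP : BConvexP P) (hQ : BConvexP Q)
    (hPQ : P ∩ Q = ∅) {x : PosCap X}
    (hq : (hullExt P x ∩ Q).Nonempty) (hp : (hullExt Q x ∩ P).Nonempty) : False := by
  obtain ⟨qs, ⟨c, hcP, t, σ, ht, hσ, htσ, hqs⟩, hqsQ⟩ := hq
  obtain ⟨ps, ⟨d, hdQ, u, τ, hu, hτ, huτ, hps⟩, hpsP⟩ := hp
  have hσ1 : t = 1 ∨ σ = 1 := by
    rcases max_choice t σ with h | h
    · exact Or.inl (by rw [h] at htσ; exact htσ)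
    · exact Or.inr (by rw [h] at htσ; exact htσ)
  have hτ1 : u = 1 ∨ τ = 1 := by
    rcases max_choice u τ with h | h
    · exact Or.inl (by rw [h] at huτ; exact huτ)
    · exact Or.inr (by rw [h] at huτ; exact huτ)
  -- degenerate cases first
  by_cases ht0 : t = 0
  · -- qs agrees with c ∈ P
    subst ht0
    have hσ' : σ = 1 := by
      rcases hσ1 with h | h
      · exact absurd h (by norm_num)
      · exact h
    subst hσ'
    have : qs ∈ P := mem_of_agree hP hcP (fun F hF => by
      rw [hqs F hF, zero_mul, one_mul]
      exact max_eq_right (c.1.nonneg' F))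
    exact no_common hPQ this hqsQ
  by_cases hu0 : u = 0
  · subst hu0
    have hτ' : τ = 1 := by
      rcases hτ1 with h | h
      · exact absurd h (by norm_num)
      · exact h
    subst hτ'
    have : ps ∈ Q := mem_of_agree hQ hdQ (fun F hF => by
      rw [hps F hF, zero_mul, one_mul]
      exact max_eq_right (d.1.nonneg' F))
    exact no_common hPQ hpsP this
  -- main cases
  rcases hσ1 with ht1 | hσ1'
  · rcases hτ1 with hu1 | hτ1'
    · -- t = 1, u = 1 : z = pjoin σ c ps, z' = pjoin τ d qs
      subst ht1; subst hu1
      have hz : pjoin σ hσ c ps ∈ P := join_mem hP hcP hpsP hσ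
      have hz' : pjoin τ hτ d qs ∈ Q := join_mem hQ hdQ hqsQ hτ
      have hagree : ∀ F : Set X, IsClosed F →
          (pjoin τ hτ d qs).1.toFun F = (pjoin σ hσ c ps).1.toFun F := by
        intro F hF
        rw [pjoin_toFun, pjoin_toFun, hqs F hF, hps F hF]
        simp only [one_mul]
        simp [max_comm, max_assoc, max_left_comm]
      exact no_common hPQ (mem_of_agree hP hz hagree) hz'
    · -- t = 1, τ = 1 : z = pjoin (u*σ) c ps, z' = pjoin u qs d
      subst ht1; subst hτ1'
      have huσ : u * σ ∈ Set.Icc (0:ℝ) 1 :=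
        ⟨mul_nonneg hu.1 hσ.1, mul_le_one₀ hu.2 hσ.1 hσ.2⟩
      have hz : pjoin (u * σ) huσ c ps ∈ P := join_mem hP hcP hpsP huσ
      have hz' : pjoin u hu qs d ∈ Q := join_mem hQ hqsQ hdQ hu
      have hagree : ∀ F : Set X, IsClosed F →
          (pjoin u hu qs d).1.toFun F = (pjoin (u * σ) huσ c ps).1.toFun F := by
        intro F hF
        rw [pjoin_toFun, pjoin_toFun, hqs F hF, hps F hF]
        simp only [one_mul, mul_max_of_nonneg _ _ hu.1, ← mul_assoc]
        simp [max_comm, max_assoc, max_left_comm]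
      exact no_common hPQ (mem_of_agree hP hz hagree) hz'
  · rcases hτ1 with hu1 | hτ1'
    · -- σ = 1, u = 1 : z = pjoin t ps c, z' = pjoin (t*τ) d qs
      subst hσ1'; subst hu1
      have htτ : t * τ ∈ Set.Icc (0:ℝ) 1 :=
        ⟨mul_nonneg ht.1 hτ.1, mul_le_one₀ ht.2 hτ.1 hτ.2⟩
      have hz : pjoin t ht ps c ∈ P := join_mem hP hpsP hcP ht
      have hz' : pjoin (t * τ) htτ d qs ∈ Q := join_mem hQ hdQ hqsQ htτ
      have hagree : ∀ F : Set X, IsClosed F →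
          (pjoin (t * τ) htτ d qs).1.toFun F = (pjoin t ht ps c).1.toFun F := by
        intro F hF
        rw [pjoin_toFun, pjoin_toFun, hqs F hF, hps F hF]
        simp only [one_mul, mul_max_of_nonneg _ _ ht.1, ← mul_assoc]
        simp [max_comm, max_assoc, max_left_comm]
      exact no_common hPQ (mem_of_agree hP hz hagree) hz'
    · -- σ = 1, τ = 1 : split on u ≤ t or t ≤ u
      subst hσ1'; subst hτ1'
      have htpos : 0 < t := lt_of_le_of_ne ht.1 (Ne.symm ht0)
      have hupos : 0 < u := lt_of_le_of_ne hu.1 (Ne.symm hu0)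
      rcases le_total u t with hle | hle
      · -- z = pjoin (u/t) c ps ∈ P, z' = pjoin (u/t) qs d ∈ Q
        have hρ : u / t ∈ Set.Icc (0:ℝ) 1 :=
          ⟨div_nonneg hu.1 ht.1, (div_le_one htpos).mpr hle⟩
        have hz : pjoin (u / t) hρ c ps ∈ P := join_mem hP hcP hpsP hρ
        have hz' : pjoin (u / t) hρ qs d ∈ Q := join_mem hQ hqsQ hdQ hρ
        have hagree : ∀ F : Set X, IsClosed F →
            (pjoin (u / t) hρ qs d).1.toFun F = (pjoin (u / t) hρ c ps).1.toFun F := by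
          intro F hF
          rw [pjoin_toFun, pjoin_toFun, hqs F hF, hps F hF]
          simp only [one_mul, mul_max_of_nonneg _ _ hρ.1, ← mul_assoc,
            div_mul_cancel₀ _ (ne_of_gt htpos)]
          simp [max_comm, max_assoc, max_left_comm]
        exact no_common hPQ (mem_of_agree hP hz hagree) hz'
      · -- z = pjoin (t/u) ps c ∈ P, z' = pjoin (t/u) d qs ∈ Q
        have hρ : t / u ∈ Set.Icc (0:ℝ) 1 :=
          ⟨div_nonneg ht.1 hu.1, (div_le_one hupos).mpr hle⟩
        have hz : pjoin (t / u) hρ ps c ∈ P := join_mem hP hpsP hcP hρ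
        have hz' : pjoin (t / u) hρ d qs ∈ Q := join_mem hQ hdQ hqsQ hρ
        have hagree : ∀ F : Set X, IsClosed F →
            (pjoin (t / u) hρ d qs).1.toFun F = (pjoin (t / u) hρ ps c).1.toFun F := by
          intro F hF
          rw [pjoin_toFun, pjoin_toFun, hqs F hF, hps F hF]
          simp only [one_mul, mul_max_of_nonneg _ _ hρ.1, ← mul_assoc,
            div_mul_cancel₀ _ (ne_of_gt hupos)]
          simp [max_comm, max_assoc, max_left_comm]
        exact no_common hPQ (mem_of_agree hP hz hagree) hz'

/-- Kakutani-type partition theorem for B-convexity. -/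
lemma exists_partition {A' D' : Set (PosCap X)} (hA' : BConvexP A') (hD' : BConvexP D')
    (hAne : A'.Nonempty) (hDne : D'.Nonempty) (hdisj : A' ∩ D' = ∅) :
    ∃ P Q : Set (PosCap X), BConvexP P ∧ BConvexP Q ∧ A' ⊆ P ∧ D' ⊆ Q ∧
      P ∩ Q = ∅ ∧ P ∪ Q = Set.univ := by
  classical
  let α := {pq : Set (PosCap X) × Set (PosCap X) //
    BConvexP pq.1 ∧ BConvexP pq.2 ∧ A' ⊆ pq.1 ∧ D' ⊆ pq.2 ∧ pq.1 ∩ pq.2 = ∅}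
  haveI : Nonempty α := ⟨⟨(A', D'), hA', hD', le_refl _, le_refl _, hdisj⟩⟩
  have hchains : ∀ c : Set α, IsChain (· ≤ ·) c → c.Nonempty → BddAbove c := by
    intro c hchain hcne
    obtain ⟨z₀, hz₀⟩ := hcne
    have hcompat : ∀ z₁ z₂ : α, z₁ ∈ c → z₂ ∈ c →
        z₁.1.1 ≤ z₂.1.1 ∧ z₁.1.2 ≤ z₂.1.2 ∨ z₂.1.1 ≤ z₁.1.1 ∧ z₂.1.2 ≤ z₁.1.2 := by
      intro z₁ z₂ h₁ h₂
      rcases hchain.total h₁ h₂ with hle | hle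
      · exact Or.inl (Prod.le_def.mp hle)
      · exact Or.inr (Prod.le_def.mp hle)
    refine ⟨⟨(⋃ z ∈ c, z.1.1, ⋃ z ∈ c, z.1.2), ?_, ?_, ?_, ?_, ?_⟩, ?_⟩
    · rintro ν hν μ hμ s hs κ hκ
      simp only [Set.mem_iUnion] at hν hμ ⊢
      obtain ⟨z₁, hz₁c, hν⟩ := hν
      obtain ⟨z₂, hz₂c, hμ⟩ := hμ
      rcases hcompat z₁ z₂ hz₁c hz₂c with hle | hle
      · exact ⟨z₂, hz₂c, z₂.2.1 ν (hle.1 hν) μ hμ s hs κ hκ⟩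
      · exact ⟨z₁, hz₁c, z₁.2.1 ν hν μ (hle.1 hμ) s hs κ hκ⟩
    · rintro ν hν μ hμ s hs κ hκ
      simp only [Set.mem_iUnion] at hν hμ ⊢
      obtain ⟨z₁, hz₁c, hν⟩ := hν
      obtain ⟨z₂, hz₂c, hμ⟩ := hμ
      rcases hcompat z₁ z₂ hz₁c hz₂c with hle | hle
      · exact ⟨z₂, hz₂c, z₂.2.2.1 ν (hle.2 hν) μ hμ s hs κ hκ⟩
      · exact ⟨z₁, hz₁c, z₁.2.2.1 ν hν μ (hle.2 hμ) s hs κ hκ⟩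
    · exact z₀.2.2.2.1.trans (Set.subset_biUnion_of_mem (u := fun z : α => z.1.1) hz₀)
    · exact z₀.2.2.2.2.1.trans (Set.subset_biUnion_of_mem (u := fun z : α => z.1.2) hz₀)
    · apply Set.eq_empty_iff_forall_notMem.mpr
      rintro κ ⟨hκ1, hκ2⟩
      simp only [Set.mem_iUnion] at hκ1 hκ2
      obtain ⟨z₁, hz₁c, h1⟩ := hκ1
      obtain ⟨z₂, hz₂c, h2⟩ := hκ2
      rcases hcompat z₁ z₂ hz₁c hz₂c with hle | hle
      · exact no_common z₂.2.2.2.2.2 (hle.1 h1) h2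
      · exact no_common z₁.2.2.2.2.2 h1 (hle.2 h2)
    · rintro z hz
      refine Prod.le_def.mpr ⟨?_, ?_⟩
      · exact Set.subset_biUnion_of_mem (u := fun z : α => z.1.1) hz
      · exact Set.subset_biUnion_of_mem (u := fun z : α => z.1.2) hz
  obtain ⟨m, hmax⟩ := zorn_le_nonempty hchains
  refine ⟨m.1.1, m.1.2, m.2.1, m.2.2.1, m.2.2.2.1, m.2.2.2.2.1, m.2.2.2.2.2, ?_⟩
  by_contra hPQ
  obtain ⟨x, hx⟩ : ∃ x : PosCap X, x ∉ m.1.1 ∪ m.1.2 := by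
    by_contra h
    push_neg at h
    exact hPQ (Set.eq_univ_iff_forall.mpr h)
  have hPne : m.1.1.Nonempty := hAne.mono m.2.2.2.1
  have hQne : m.1.2.Nonempty := hDne.mono m.2.2.2.2.1
  have hq : (hullExt m.1.1 x ∩ m.1.2).Nonempty := by
    rcases Set.eq_empty_or_nonempty (hullExt m.1.1 x ∩ m.1.2) with hemp | hne
    · exfalso
      have hgood : BConvexP (hullExt m.1.1 x) ∧ BConvexP m.1.2 ∧
          A' ⊆ hullExt m.1.1 x ∧ D' ⊆ m.1.2 ∧ hullExt m.1.1 x ∩ m.1.2 = ∅ :=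
        ⟨hullExt_bconvex m.2.1 x, m.2.2.1, m.2.2.2.1.trans (subset_hullExt _ x),
          m.2.2.2.2.1, hemp⟩
      have hle : m ≤ (⟨(hullExt m.1.1 x, m.1.2), hgood⟩ : α) :=
        Prod.le_def.mpr ⟨subset_hullExt _ x, le_refl _⟩
      have hge := Prod.le_def.mp (hmax hle)
      exact hx (Or.inl (hge.1 (mem_hullExt_self hPne x)))
    · exact hne
  have hp : (hullExt m.1.2 x ∩ m.1.1).Nonempty := by
    rcases Set.eq_empty_or_nonempty (hullExt m.1.2 x ∩ m.1.1) with hemp | hne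
    · exfalso
      have hgood : BConvexP m.1.1 ∧ BConvexP (hullExt m.1.2 x) ∧
          A' ⊆ m.1.1 ∧ D' ⊆ hullExt m.1.2 x ∧ m.1.1 ∩ hullExt m.1.2 x = ∅ :=
        ⟨m.2.1, hullExt_bconvex m.2.2.1 x, m.2.2.2.1,
          m.2.2.2.2.1.trans (subset_hullExt _ x), by rw [Set.inter_comm]; exact hemp⟩
      have hle : m ≤ (⟨(m.1.1, hullExt m.1.2 x), hgood⟩ : α) :=
        Prod.le_def.mpr ⟨le_refl _, subset_hullExt _ x⟩
      have hge := Prod.le_def.mp (hmax hle)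
      exact hx (Or.inr (hge.2 (mem_hullExt_self hQne x)))
    · exact hne
  exact partition_contradiction m.2.1 m.2.2.1 m.2.2.2.2.2 hq hp

end BNormal
namespace BNormal

open TopologicalSpace Filter

variable {X : Type*} [TopologicalSpace X]

lemma bconvex_closure {C : Set (PosCap X)} (hC : BConvexP C) : BConvexP (closure C) := by
  rintro ν hν μ hμ s hs κ hκ
  rw [mem_closure_iff_nhds]
  intro N hN
  rw [nhds_induced] at hN
  obtain ⟨M, hM, hMN⟩ := Filter.mem_comap.mp hN
  rw [nhds_cap] at hM
  have hM' : M ∈ ⨅ i : {t : Set (Capacity X) // (κ : PosCap X).1 ∈ t ∧ t ∈ SB X},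
      (Filter.principal i.1 : Filter (Capacity X)) := by
    rwa [iInf_subtype]
  obtain ⟨I, hIfin, V, hVmem, hVuniv, hMeq, -⟩ := Filter.mem_iInf'.mp hM'
  -- constraints for the two factors
  have main : ∀ i : {t : Set (Capacity X) // (κ : PosCap X).1 ∈ t ∧ t ∈ SB X},
      ∃ Cν Cμ : Set (Capacity X), IsOpen Cν ∧ IsOpen Cμ ∧ ν.1 ∈ Cν ∧ μ.1 ∈ Cμ ∧
        ∀ ν' μ' : PosCap X, ν'.1 ∈ Cν → μ'.1 ∈ Cμ → (pjoin s hs ν' μ').1 ∈ i.1 := by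
    rintro ⟨t, hκt, (⟨F, a, hF, rfl⟩ | ⟨U, b, hU, rfl⟩)⟩
    · -- upper subbasic constraint
      have hκF : max (s * ν.1.toFun F) (μ.1.toFun F) < a := by
        rw [← hκ F hF]; exact hκt
      rcases eq_or_lt_of_le hs.1 with hs0 | hs0
      · refine ⟨Set.univ, {y : Capacity X | y.toFun F < a}, isOpen_univ,
          isOpen_SB (Or.inl ⟨F, a, hF, rfl⟩), trivial, ?_, ?_⟩
        · exact lt_of_le_of_lt (le_max_right _ _) hκF
        · intro ν' μ' _ hμ'
          show max (s * ν'.1.toFun F) (μ'.1.toFun F) < a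
          have ha0 : 0 < a :=
            lt_of_le_of_lt (le_trans (μ.1.nonneg' F) (le_max_right _ _)) hκF
          have h0 : s * ν'.1.toFun F = 0 := by rw [← hs0, zero_mul]
          rw [h0]
          exact max_lt ha0 hμ'
      · refine ⟨{y : Capacity X | y.toFun F < a / s}, {y : Capacity X | y.toFun F < a},
          isOpen_SB (Or.inl ⟨F, a / s, hF, rfl⟩), isOpen_SB (Or.inl ⟨F, a, hF, rfl⟩),
          ?_, ?_, ?_⟩
        · show ν.1.toFun F < a / s
          rw [lt_div_iff₀ hs0, mul_comm]
          exact lt_of_le_of_lt (le_max_left _ _) hκF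
        · exact lt_of_le_of_lt (le_max_right _ _) hκF
        · intro ν' μ' hν' hμ'
          show max (s * ν'.1.toFun F) (μ'.1.toFun F) < a
          refine max_lt ?_ hμ'
          calc s * ν'.1.toFun F < s * (a / s) := mul_lt_mul_of_pos_left hν' hs0
            _ = a := mul_div_cancel₀ _ (ne_of_gt hs0)
    · -- lower subbasic constraint
      have hκU : b < max (s * capOpen ν.1 U) (capOpen μ.1 U) := by
        rw [← capOpen_of_agree (hs := hs) hκ U]; exact hκt
      rcases lt_max_iff.mp hκU with hbig | hbig
      · rcases eq_or_lt_of_le hs.1 with hs0 | hs0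
        · have hb0 : b < 0 := by rwa [← hs0, zero_mul] at hbig
          refine ⟨Set.univ, Set.univ, isOpen_univ, isOpen_univ, trivial, trivial, ?_⟩
          intro ν' μ' _ _
          show b < capOpen (pjoin s hs ν' μ').1 U
          exact lt_of_lt_of_le hb0 (capOpen_nonneg _ _)
        · refine ⟨{y : Capacity X | b / s < capOpen y U}, Set.univ,
            isOpen_SB (Or.inr ⟨U, b / s, hU, rfl⟩), isOpen_univ, ?_, trivial, ?_⟩
          · show b / s < capOpen ν.1 U
            rw [div_lt_iff₀ hs0, mul_comm]
            exact hbig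
          · intro ν' μ' hν' _
            show b < capOpen (pjoin s hs ν' μ').1 U
            rw [capOpen_pjoin]
            refine lt_of_lt_of_le ?_ (le_max_left _ _)
            have h1 := (div_lt_iff₀ hs0).mp hν'
            rw [mul_comm] at h1
            exact h1
      · refine ⟨Set.univ, {y : Capacity X | b < capOpen y U}, isOpen_univ,
          isOpen_SB (Or.inr ⟨U, b, hU, rfl⟩), trivial, hbig, ?_⟩
        intro ν' μ' _ hμ'
        show b < capOpen (pjoin s hs ν' μ').1 U
        rw [capOpen_pjoin]
        exact lt_of_lt_of_le hμ' (le_max_right _ _)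
  choose Cν Cμ hCνo hCμo hνmem hμmem hkey using main
  -- approximate the two factors inside C
  have hνopen : IsOpen (⋂ i ∈ I, {y : PosCap X | y.1 ∈ Cν i}) :=
    hIfin.isOpen_biInter (fun i _ => (hCνo i).preimage continuous_subtype_val)
  have hνin : ν ∈ ⋂ i ∈ I, {y : PosCap X | y.1 ∈ Cν i} := by
    simp only [Set.mem_iInter, Set.mem_setOf_eq]
    exact fun i _ => hνmem i
  obtain ⟨ν', hν'⟩ := _root_.mem_closure_iff.mp hν _ hνopen hνin
  obtain ⟨hν'mem, hν'C⟩ := hν'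
  have hμopen : IsOpen (⋂ i ∈ I, {y : PosCap X | y.1 ∈ Cμ i}) :=
    hIfin.isOpen_biInter (fun i _ => (hCμo i).preimage continuous_subtype_val)
  have hμin : μ ∈ ⋂ i ∈ I, {y : PosCap X | y.1 ∈ Cμ i} := by
    simp only [Set.mem_iInter, Set.mem_setOf_eq]
    exact fun i _ => hμmem i
  obtain ⟨μ', hμ'⟩ := _root_.mem_closure_iff.mp hμ _ hμopen hμin
  obtain ⟨hμ'mem, hμ'C⟩ := hμ'
  simp only [Set.mem_iInter, Set.mem_setOf_eq] at hν'mem hμ'mem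
  refine ⟨pjoin s hs ν' μ', hMN ?_, join_mem hC hν'C hμ'C hs⟩
  show (pjoin s hs ν' μ').1 ∈ M
  rw [hMeq]
  simp only [Set.mem_iInter]
  intro i hi
  exact Filter.mem_principal.mp (hVmem i) (hkey i ν' μ' (hν'mem i hi) (hμ'mem i hi))
end BNormal
open BNormal in
/-- The convexity of closed B-convex subsets of `M_∪X` is normal. -/
theorem bconvexity_poscap_normal {X : Type*} [TopologicalSpace X] [CompactSpace X]
    [T2Space X] (A D : Set (PosCap X)) (hA : IsClosed A) (hD : IsClosed D)
    (hAb : BConvexP A) (hDb : BConvexP D) (hdisj : Disjoint A D) :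
    ∃ S₁ S₂ : Set (PosCap X), IsClosed S₁ ∧ IsClosed S₂ ∧ BConvexP S₁ ∧ BConvexP S₂ ∧
      S₁ ∪ S₂ = Set.univ ∧ Disjoint A S₂ ∧ Disjoint D S₁ := by
  classical
  rcases Set.eq_empty_or_nonempty A with rfl | hAne
  · exact ⟨∅, Set.univ, isClosed_empty, isClosed_univ, bconvex_empty, bconvex_univ,
      by simp, by simp, by simp⟩
  rcases Set.eq_empty_or_nonempty D with rfl | hDne
  · exact ⟨Set.univ, ∅, isClosed_univ, isClosed_empty, bconvex_univ, bconvex_empty,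
      by simp, by simp, by simp⟩
  obtain ⟨R, hR⟩ := exists_thick_disjoint hA hD hAb hDb hdisj
  have hA'b : BConvexP (Thick R A) := thick_bconvex hAb
  have hD'b : BConvexP (Thick R D) := thick_bconvex hDb
  have hAsub : A ⊆ Thick R A := subset_interior_thick.trans interior_subset
  have hDsub : D ⊆ Thick R D := subset_interior_thick.trans interior_subset
  have hA'ne : (Thick R A).Nonempty := hAne.mono hAsub
  have hD'ne : (Thick R D).Nonempty := hDne.mono hDsub
  have hdisj' : Thick R A ∩ Thick R D = ∅ := Set.disjoint_iff_inter_eq_empty.mp hR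
  obtain ⟨P, Q, hPb, hQb, hAP, hDQ, hPQ, hPQu⟩ :=
    exists_partition hA'b hD'b hA'ne hD'ne hdisj'
  refine ⟨closure P, closure Q, isClosed_closure, isClosed_closure,
    bconvex_closure hPb, bconvex_closure hQb, ?_, ?_, ?_⟩
  · apply Set.Subset.antisymm (Set.subset_univ _)
    rw [← hPQu]
    exact Set.union_subset_union subset_closure subset_closure
  · rw [Set.disjoint_left]
    intro κ hκA hκQ
    have h1 : κ ∈ interior (Thick R A) := subset_interior_thick hκA
    have h2 : Q ⊆ (interior (Thick R A))ᶜ := by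
      intro y hy hyint
      exact no_common hPQ (hAP (interior_subset hyint)) hy
    have h3 : closure Q ⊆ (interior (Thick R A))ᶜ :=
      closure_minimal h2 (isClosed_compl_iff.mpr isOpen_interior)
    exact h3 hκQ h1
  · rw [Set.disjoint_left]
    intro κ hκD hκP
    have h1 : κ ∈ interior (Thick R D) := subset_interior_thick hκD
    have h2 : P ⊆ (interior (Thick R D))ᶜ := by
      intro y hy hyint
      exact no_common hPQ hy (hDQ (interior_subset hyint))
    have h3 : closure P ⊆ (interior (Thick R D))ᶜ :=
      closure_minimal h2 (isClosed_compl_iff.mpr isOpen_interior)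
    exact h3 hκP h1
end

section
/- Let ⋆ and ∗ be continuous t-norms, X₁,...,Xₙ compact Hausdorff spaces, u_i : ∏ X_j → [0,1] continuous, and define eu_i(ν₁,...,νₙ) = ∫^{∨⋆} u_i d(ν₁ ⊛ ⋯ ⊛ νₙ) where ⊛ is the tensor product of possibility capacities with density [ν₁ ⊛ ν₂](x,y) = [ν₁](x) ∗ [ν₂](y). Then for each i and each fixed choice of the other coordinates, the map ν_i ↦ eu_i(ν₁,...,νₙ) is quasiconvex with respect to B-convexity: for every s ∈ [0,1] the sublevel set {ν_i ∈ M_∪X_i : eu_i ≤ s} is B-convex, i.e., eu_i(c·ν ∨ ν', ...) ≤ max{eu_i(ν,...), eu_i(ν',...)} for all ν, ν' ∈ M_∪X_i and c ∈ [0,1]. -/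
open Set

/-- The expected payoff `∫^{∨⋆} u d(ν₁ ⊛ ⋯ ⊛ νₙ)`, expressed via the densities
`[ν_j](x) = ν_j({x})`: the tensor product of possibility capacities generated by the t-norm
`Tast` is the possibility capacity with density `x ↦ ∗_j [ν_j](x_j)`, and the value of a
possibility capacity on a closed set is the supremum of its density there. -/
noncomputable def euPay {n : ℕ} {Z : Fin n → Type*} [∀ j, TopologicalSpace (Z j)]
    (Tstar Tast : Tnorm) (u : (∀ j, Z j) → ℝ) (ν : ∀ j, PosCap (Z j)) : ℝ :=
  sSup ((fun t : ℝ =>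
      Tstar.op
        (sSup ((fun x : ∀ j, Z j =>
            (List.ofFn fun j => (ν j).1.toFun {x j}).foldr Tast.op 1) ''
          (u ⁻¹' Set.Icc t 1)))
        t) '' Set.Icc (0:ℝ) 1)

lemma foldr_tnorm_mem (T : Tnorm) : ∀ l : List ℝ, (∀ a ∈ l, a ∈ Set.Icc (0:ℝ) 1) →
    l.foldr T.op 1 ∈ Set.Icc (0:ℝ) 1
  | [], _ => by simp
  | a :: l, h => by
    simp only [List.foldr_cons]
    exact T.mem' _ _ (h a (by simp)) (foldr_tnorm_mem T l fun b hb => h b (by simp [hb]))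

lemma foldr_tnorm_mono (T : Tnorm) : ∀ m : ℕ, ∀ f g : Fin m → ℝ, (∀ j, f j ≤ g j) →
    (List.ofFn f).foldr T.op 1 ≤ (List.ofFn g).foldr T.op 1
  | 0, _, _, _ => by simp
  | m + 1, f, g, h => by
    simp only [List.ofFn_succ, List.foldr_cons]
    exact T.mono' _ _ _ _ (h 0)
      (foldr_tnorm_mono T m (f ∘ Fin.succ) (g ∘ Fin.succ) fun j => h j.succ)

lemma tnorm_op_max_le (T : Tnorm) (a b t : ℝ) :
    T.op (max a b) t ≤ max (T.op a t) (T.op b t) := by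
  rcases le_total a b with h | h
  · rw [max_eq_right h]; exact le_max_right _ _
  · rw [max_eq_left h]; exact le_max_left _ _

lemma sSup_image_le_max {α : Type*} (f g h : α → ℝ) (S : Set α)
    (hg : ∀ x ∈ S, g x ∈ Set.Icc (0:ℝ) 1) (hh : ∀ x ∈ S, h x ∈ Set.Icc (0:ℝ) 1)
    (hle : ∀ x ∈ S, f x ≤ max (g x) (h x)) :
    sSup (f '' S) ≤ max (sSup (g '' S)) (sSup (h '' S)) := by
  have h0 : 0 ≤ max (sSup (g '' S)) (sSup (h '' S)) :=
    le_max_of_le_left (Real.sSup_nonneg fun y hy => by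
      obtain ⟨x, hx, rfl⟩ := hy; exact (hg x hx).1)
  refine Real.sSup_le ?_ h0
  rintro y ⟨x, hx, rfl⟩
  have hgub : g x ≤ sSup (g '' S) :=
    le_csSup ⟨1, by rintro y ⟨x', hx', rfl⟩; exact (hg x' hx').2⟩ ⟨x, hx, rfl⟩
  have hhub : h x ≤ sSup (h '' S) :=
    le_csSup ⟨1, by rintro y ⟨x', hx', rfl⟩; exact (hh x' hx').2⟩ ⟨x, hx, rfl⟩
  exact (hle x hx).trans (max_le_max hgub hhub)

/-- Quasiconvexity of the expected payoff in the `i`-th mixed strategy with respect to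
B-convexity: replacing the `i`-th strategy by (a possibility capacity with density)
`c·[ν i] ∨ [ν']` does not exceed the maximum of the two payoffs. -/
theorem euPay_quasiconvex {n : ℕ} {Z : Fin n → Type*} [∀ j, TopologicalSpace (Z j)]
    [∀ j, CompactSpace (Z j)] [∀ j, T2Space (Z j)]
    (Tstar Tast : Tnorm) (i : Fin n) (u : (∀ j, Z j) → ℝ) (hu : Continuous u)
    (hur : ∀ x, u x ∈ Set.Icc (0:ℝ) 1)
    (ν : ∀ j, PosCap (Z j)) (ν' : PosCap (Z i)) (c : ℝ) (hc : c ∈ Set.Icc (0:ℝ) 1)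
    (κ : PosCap (Z i))
    (hκ : ∀ x : Z i, κ.1.toFun {x} = max (c * (ν i).1.toFun {x}) (ν'.1.toFun {x})) :
    euPay Tstar Tast u (Function.update ν i κ) ≤
      max (euPay Tstar Tast u ν) (euPay Tstar Tast u (Function.update ν i ν')) := by
  classical
  have hDmem : ∀ (w : ∀ j, PosCap (Z j)) (x : ∀ j, Z j),
      (List.ofFn fun j => (w j).1.toFun {x j}).foldr Tast.op 1 ∈ Set.Icc (0:ℝ) 1 := by
    intro w x
    apply foldr_tnorm_mem
    intro a ha
    rw [List.mem_ofFn] at ha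
    obtain ⟨j, rfl⟩ := ha
    exact ⟨(w j).1.nonneg' _, (w j).1.le_one' _⟩
  -- pointwise density inequality
  have key : ∀ x : ∀ j, Z j,
      (List.ofFn fun j => ((Function.update ν i κ) j).1.toFun {x j}).foldr Tast.op 1 ≤
      max ((List.ofFn fun j => (ν j).1.toFun {x j}).foldr Tast.op 1)
        ((List.ofFn fun j => ((Function.update ν i ν') j).1.toFun {x j}).foldr Tast.op 1) := by
    intro x
    rcases le_total (c * (ν i).1.toFun {x i}) (ν'.1.toFun {x i}) with h | h
    · have heq : (fun j => ((Function.update ν i κ) j).1.toFun {x j}) =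
          (fun j => ((Function.update ν i ν') j).1.toFun {x j}) := by
        funext j
        by_cases hj : j = i
        · subst hj; simp [Function.update_self, hκ, max_eq_right h]
        · simp [Function.update_of_ne hj]
      rw [heq]
      exact le_max_right _ _
    · refine le_trans ?_ (le_max_left _ _)
      apply foldr_tnorm_mono
      intro j
      by_cases hj : j = i
      · subst hj
        simp only [Function.update_self, hκ, max_eq_left h]
        exact mul_le_of_le_one_left ((ν j).1.nonneg' _) hc.2
      · simp [Function.update_of_ne hj]
  have hSmem : ∀ (w : ∀ j, PosCap (Z j)) (S : Set (∀ j, Z j)),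
      sSup ((fun x : ∀ j, Z j =>
        (List.ofFn fun j => (w j).1.toFun {x j}).foldr Tast.op 1) '' S) ∈ Set.Icc (0:ℝ) 1 := by
    intro w S
    constructor
    · exact Real.sSup_nonneg fun y hy => by
        obtain ⟨x, hx, rfl⟩ := hy; exact (hDmem w x).1
    · exact Real.sSup_le (fun y hy => by
        obtain ⟨x, hx, rfl⟩ := hy; exact (hDmem w x).2) zero_le_one
  unfold euPay
  apply sSup_image_le_max
  · intro t ht
    exact Tstar.mem' _ _ (hSmem ν _) ht
  · intro t ht
    exact Tstar.mem' _ _ (hSmem _ _) ht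
  · intro t ht
    have h1 : sSup ((fun x : ∀ j, Z j =>
        (List.ofFn fun j => ((Function.update ν i κ) j).1.toFun {x j}).foldr Tast.op 1) ''
          (u ⁻¹' Set.Icc t 1)) ≤
        max (sSup ((fun x : ∀ j, Z j =>
            (List.ofFn fun j => (ν j).1.toFun {x j}).foldr Tast.op 1) '' (u ⁻¹' Set.Icc t 1)))
          (sSup ((fun x : ∀ j, Z j =>
            (List.ofFn fun j => ((Function.update ν i ν') j).1.toFun {x j}).foldr Tast.op 1) ''
              (u ⁻¹' Set.Icc t 1))) := by
      apply sSup_image_le_max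
      · intro x _; exact hDmem ν x
      · intro x _; exact hDmem _ x
      · intro x _; exact key x
    calc Tstar.op (sSup _) t ≤ Tstar.op (max _ _) t := Tstar.mono' _ _ _ _ h1 le_rfl
      _ ≤ _ := tnorm_op_max_le Tstar _ _ t
end

section
/- Consider the 2-player game on pure strategy sets {a,b} with payoffs u₁(a,a)=3, u₁(a,b)=0, u₁(b,a)=1, u₁(b,b)=2 and u₂(a,a)=0, u₂(a,b)=3, u₂(b,a)=2, u₂(b,b)=1. For possibility capacities ν, μ on {a,b} with densities λ₁=[ν](a), β₁=[ν](b), λ₂=[μ](a), β₂=[μ](b) (so max{λᵢ,βᵢ}=1), define the Choquet expected payoffs cu₁(ν,μ) = β₁∧λ₂ + 2(β₁∧β₂) + 3(λ₁∧λ₂) and cu₂(ν,μ) = 2(β₁∧λ₂) + β₁∧β₂ + 3(λ₁∧β₂). Then there is no Nash min-equilibrium: for every pair (ν,μ) there exist i ∈ {1,2} and a possibility capacity deviating in the i-th coordinate that strictly decreases cu_i. -/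
open Set

/-- Choquet expected payoff of player 1 in the example game, in terms of the densities
`(λ₁,β₁)` and `(λ₂,β₂)` of the two possibility strategies. -/
noncomputable def cu1 (l1 b1 l2 b2 : ℝ) : ℝ :=
  min b1 l2 + 2 * min b1 b2 + 3 * min l1 l2

/-- Choquet expected payoff of player 2 in the example game. -/
noncomputable def cu2 (l1 b1 l2 b2 : ℝ) : ℝ :=
  2 * min b1 l2 + min b1 b2 + 3 * min l1 b2

/-- The example game in possibility capacities with Choquet payoffs has no Nash
min-equilibrium: from every strategy profile some player can strictly decrease
their expected payoff by a unilateral deviation. -/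
theorem no_nash_min_equilibrium_choquet (l1 b1 l2 b2 : ℝ)
    (h1 : l1 ∈ Set.Icc (0:ℝ) 1) (h2 : b1 ∈ Set.Icc (0:ℝ) 1)
    (h3 : l2 ∈ Set.Icc (0:ℝ) 1) (h4 : b2 ∈ Set.Icc (0:ℝ) 1)
    (hm1 : max l1 b1 = 1) (hm2 : max l2 b2 = 1) :
    (∃ l1' b1' : ℝ, l1' ∈ Set.Icc (0:ℝ) 1 ∧ b1' ∈ Set.Icc (0:ℝ) 1 ∧ max l1' b1' = 1 ∧
        cu1 l1' b1' l2 b2 < cu1 l1 b1 l2 b2) ∨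
    (∃ l2' b2' : ℝ, l2' ∈ Set.Icc (0:ℝ) 1 ∧ b2' ∈ Set.Icc (0:ℝ) 1 ∧ max l2' b2' = 1 ∧
        cu2 l1 b1 l2' b2' < cu2 l1 b1 l2 b2) := by
  obtain ⟨hl10, hl11⟩ := h1
  obtain ⟨hb10, hb11⟩ := h2
  obtain ⟨hl20, hl21⟩ := h3
  obtain ⟨hb20, hb21⟩ := h4
  have u01 : (0:ℝ) ∈ Set.Icc (0:ℝ) 1 := by constructor <;> norm_num
  have u11 : (1:ℝ) ∈ Set.Icc (0:ℝ) 1 := by constructor <;> norm_num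
  have m10 : max (1:ℝ) 0 = 1 := by norm_num
  have m01 : max (0:ℝ) 1 = 1 := by norm_num
  rcases max_choice l1 b1 with hc1 | hc1 <;> rw [hc1] at hm1 <;> subst hm1
  · -- l1 = 1
    by_cases hb1 : b1 = 0
    · subst hb1
      by_cases hb2 : b2 = 0
      · subst hb2
        have hl2 : l2 = 1 := by
          rw [max_eq_left hl20] at hm2; exact hm2
        subst hl2
        left
        exact ⟨0, 1, u01, u11, m01, by
          simp only [cu1, min_def]; split_ifs <;> linarith⟩
      · right
        have hb2' : 0 < b2 := lt_of_le_of_ne hb20 (Ne.symm hb2)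
        exact ⟨1, 0, u11, u01, m10, by
          simp only [cu2, min_def]; split_ifs <;> linarith⟩
    · left
      have hb1' : 0 < b1 := lt_of_le_of_ne hb10 (Ne.symm hb1)
      refine ⟨1, 0, u11, u01, m10, ?_⟩
      rcases max_choice l2 b2 with hc2 | hc2 <;> rw [hc2] at hm2 <;> subst hm2 <;>
        · simp only [cu1, min_def]; split_ifs <;> linarith
  · -- b1 = 1
    by_cases hl1 : l1 = 0
    · subst hl1
      rcases max_choice l2 b2 with hc2 | hc2 <;> rw [hc2] at hm2 <;> subst hm2
      · -- l2 = 1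
        by_cases hb2 : b2 = 0
        · subst hb2
          right
          exact ⟨0, 1, u01, u11, m01, by
            simp only [cu2, min_def]; split_ifs <;> linarith⟩
        · right
          have hb2' : 0 < b2 := lt_of_le_of_ne hb20 (Ne.symm hb2)
          exact ⟨1, 0, u11, u01, m10, by
            simp only [cu2, min_def]; split_ifs <;> linarith⟩
      · -- b2 = 1
        by_cases hl2 : l2 = 1
        · subst hl2
          right
          exact ⟨1, 0, u11, u01, m10, by
            simp only [cu2, min_def]; split_ifs <;> linarith⟩
        · left
          have hl2' : l2 < 1 := lt_of_le_of_ne hl21 hl2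
          exact ⟨1, 0, u11, u01, m10, by
            simp only [cu1, min_def]; split_ifs <;> linarith⟩
    · have hl1' : 0 < l1 := lt_of_le_of_ne hl10 (Ne.symm hl1)
      rcases max_choice l2 b2 with hc2 | hc2 <;> rw [hc2] at hm2 <;> subst hm2
      · -- l2 = 1
        left
        exact ⟨0, 1, u01, u11, m01, by
          simp only [cu1, min_def]; split_ifs <;> linarith⟩
      · -- b2 = 1
        left
        exact ⟨1, 0, u11, u01, m10, by
          simp only [cu1, min_def]; split_ifs <;> linarith⟩
end

section
/- Let X₁, X₂ be compact Hausdorff spaces, ∗ a continuous t-norm, and ⊛ the tensor product of possibility capacities generated by ∗. Then M(p_i) ∘ ⊛ = pr_i for i = 1,2: for all ν₁ ∈ M_∪X₁, ν₂ ∈ M_∪X₂ and every closed A ⊆ X_i, (ν₁ ⊛ ν₂)(p_i⁻¹(A)) = ν_i(A), where p_i : X₁×X₂ → X_i is the projection. -/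
open Set

section Aux

variable {X : Type*} [TopologicalSpace X]

lemma cap_biUnion_lt (ν : Capacity X) (hν : IsPossibility ν) {ι : Type*} (t : Finset ι)
    (K : ι → Set X) (hcl : ∀ i ∈ t, IsClosed (K i)) {a : ℝ} (ha : 0 < a)
    (h : ∀ i ∈ t, ν.toFun (K i) < a) : ν.toFun (⋃ i ∈ t, K i) < a := by
  classical
  induction t using Finset.induction with
  | empty => simpa [ν.empty'] using ha
  | insert j t hx ih =>
    rw [Finset.set_biUnion_insert,
      hν _ _ (hcl j (Finset.mem_insert_self j t))
        (isClosed_biUnion_finset fun i hi => hcl i (Finset.mem_insert_of_mem hi))]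
    exact max_lt (h j (Finset.mem_insert_self j t))
      (ih (fun i hi => hcl i (Finset.mem_insert_of_mem hi))
        (fun i hi => h i (Finset.mem_insert_of_mem hi)))

variable [CompactSpace X] [T2Space X]

lemma cap_lt_of_points (ν : Capacity X) (hν : IsPossibility ν) {F : Set X} (hF : IsClosed F)
    {a : ℝ} (ha : 0 < a) (h : ∀ x ∈ F, ν.toFun {x} < a) : ν.toFun F < a := by
  classical
  have hO : ∀ x : F, ∃ O : Set X, IsOpen O ∧ {(x : X)} ⊆ O ∧
      ∀ B : Set X, B ⊆ O → IsCompact B → ν.toFun B < a := fun x =>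
    ν.usc' {(x : X)} isClosed_singleton a (h x x.2)
  choose O hOopen hOmem hOlt using hO
  have hcov : F ⊆ ⋃ x : F, O x := fun y hy =>
    mem_iUnion.2 ⟨⟨y, hy⟩, hOmem ⟨y, hy⟩ rfl⟩
  obtain ⟨t, ht⟩ := hF.isCompact.elim_finite_subcover O hOopen hcov
  obtain ⟨K, hKc, hKO, hKeq⟩ := hF.isCompact.finite_compact_cover t O
    (fun i _ => hOopen i) ht
  rw [hKeq]
  exact cap_biUnion_lt ν hν t K (fun i _ => (hKc i).isClosed) ha
    (fun i _ => hOlt i (K i) (hKO i) (hKc i))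

lemma cap_le_of_points (ν : Capacity X) (hν : IsPossibility ν) {F : Set X} (hF : IsClosed F)
    {a : ℝ} (ha : 0 ≤ a) (h : ∀ x ∈ F, ν.toFun {x} ≤ a) : ν.toFun F ≤ a := by
  by_contra hcon
  push_neg at hcon
  exact absurd (cap_lt_of_points ν hν hF (lt_of_le_of_lt ha hcon)
    (fun x hx => lt_of_le_of_lt (h x hx) hcon)) (lt_irrefl _)

/-- For a possibility capacity, point densities approach 1 arbitrarily closely. -/
lemma cap_exists_point_gt (ν : Capacity X) (hν : IsPossibility ν) {δ : ℝ} (hδ : 0 < δ) :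
    ∃ y : X, 1 - δ < ν.toFun {y} := by
  by_contra hcon
  push_neg at hcon
  set δ' := min δ (1/2) with hδ'
  have hδ'pos : 0 < δ' := lt_min hδ (by norm_num)
  have h1 : ν.toFun (Set.univ : Set X) ≤ 1 - δ' := by
    apply cap_le_of_points ν hν isClosed_univ (by linarith [min_le_right δ (1/2)])
    intro y _
    linarith [hcon y, min_le_left δ (1/2)]
  rw [ν.univ'] at h1
  linarith
end Aux

/-- The tensor product of possibility capacities (the possibility capacity `κ` with density
`[κ](x,y) = [ν₁](x) ∗ [ν₂](y)`) marginalizes to the factors: `κ(p_i⁻¹(A)) = ν_i(A)`. -/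
theorem tensor_marginals {X₁ X₂ : Type*}
    [TopologicalSpace X₁] [CompactSpace X₁] [T2Space X₁]
    [TopologicalSpace X₂] [CompactSpace X₂] [T2Space X₂]
    (T : Tnorm) (ν₁ : Capacity X₁) (ν₂ : Capacity X₂)
    (h₁ : IsPossibility ν₁) (h₂ : IsPossibility ν₂)
    (κ : Capacity (X₁ × X₂)) (hκp : IsPossibility κ)
    (hκ : ∀ (x : X₁) (y : X₂), κ.toFun {(x, y)} = T.op (ν₁.toFun {x}) (ν₂.toFun {y})) :
    (∀ A : Set X₁, IsClosed A → κ.toFun (Prod.fst ⁻¹' A) = ν₁.toFun A) ∧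
    (∀ A : Set X₂, IsClosed A → κ.toFun (Prod.snd ⁻¹' A) = ν₂.toFun A) := by
  constructor
  · intro A hA
    have hclpre : IsClosed (Prod.fst ⁻¹' A : Set (X₁ × X₂)) := hA.preimage continuous_fst
    apply le_antisymm
    · apply cap_le_of_points κ hκp hclpre (ν₁.nonneg' A)
      rintro ⟨x, y⟩ hxy
      rw [hκ x y]
      calc T.op (ν₁.toFun {x}) (ν₂.toFun {y}) ≤ T.op (ν₁.toFun {x}) 1 :=
            T.mono' _ _ _ _ le_rfl (ν₂.le_one' _)
        _ = ν₁.toFun {x} := T.one_id' _ ⟨ν₁.nonneg' _, ν₁.le_one' _⟩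
        _ ≤ ν₁.toFun A := ν₁.mono' _ _ (singleton_subset_iff.2 hxy)
    · apply cap_le_of_points ν₁ h₁ hA (κ.nonneg' _)
      intro x hx
      set s := ν₁.toFun {x} with hs
      apply le_of_forall_pos_le_add
      intro ε hε
      have hg : Continuous fun t : ℝ => T.op s t :=
        T.cont'.comp (continuous_const.prodMk continuous_id)
      obtain ⟨δ, hδpos, hδ⟩ := Metric.continuousAt_iff.mp hg.continuousAt ε hε
      obtain ⟨y, hy⟩ := cap_exists_point_gt ν₂ h₂ hδpos
      have hdist : dist (ν₂.toFun {y}) 1 < δ := by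
        rw [Real.dist_eq, abs_of_nonpos (by linarith [ν₂.le_one' ({y} : Set X₂)])]
        linarith
      have h2 := hδ hdist
      rw [Real.dist_eq] at h2
      have h3 : T.op s 1 = s := T.one_id' _ ⟨ν₁.nonneg' _, ν₁.le_one' _⟩
      have h4 : s - ε < T.op s (ν₂.toFun {y}) := by
        rw [h3] at h2
        cases abs_lt.mp h2 with
        | intro hl hr => linarith
      have h5 : T.op s (ν₂.toFun {y}) ≤ κ.toFun (Prod.fst ⁻¹' A) := by
        rw [← hκ x y]
        exact κ.mono' _ _ (singleton_subset_iff.2 hx)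
      linarith
  · intro A hA
    have hclpre : IsClosed (Prod.snd ⁻¹' A : Set (X₁ × X₂)) := hA.preimage continuous_snd
    apply le_antisymm
    · apply cap_le_of_points κ hκp hclpre (ν₂.nonneg' A)
      rintro ⟨x, y⟩ hxy
      rw [hκ x y, T.comm']
      calc T.op (ν₂.toFun {y}) (ν₁.toFun {x}) ≤ T.op (ν₂.toFun {y}) 1 :=
            T.mono' _ _ _ _ le_rfl (ν₁.le_one' _)
        _ = ν₂.toFun {y} := T.one_id' _ ⟨ν₂.nonneg' _, ν₂.le_one' _⟩
        _ ≤ ν₂.toFun A := ν₂.mono' _ _ (singleton_subset_iff.2 hxy)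
    · apply cap_le_of_points ν₂ h₂ hA (κ.nonneg' _)
      intro y hy
      set s := ν₂.toFun {y} with hs
      apply le_of_forall_pos_le_add
      intro ε hε
      have hg : Continuous fun t : ℝ => T.op s t :=
        T.cont'.comp (continuous_const.prodMk continuous_id)
      obtain ⟨δ, hδpos, hδ⟩ := Metric.continuousAt_iff.mp hg.continuousAt ε hε
      obtain ⟨x, hx⟩ := cap_exists_point_gt ν₁ h₁ hδpos
      have hdist : dist (ν₁.toFun {x}) 1 < δ := by
        rw [Real.dist_eq, abs_of_nonpos (by linarith [ν₁.le_one' ({x} : Set X₁)])]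
        linarith
      have h2 := hδ hdist
      rw [Real.dist_eq] at h2
      have h3 : T.op s 1 = s := T.one_id' _ ⟨ν₂.nonneg' _, ν₂.le_one' _⟩
      have h4 : s - ε < T.op s (ν₁.toFun {x}) := by
        rw [h3] at h2
        cases abs_lt.mp h2 with
        | intro hl hr => linarith
      have h5 : T.op s (ν₁.toFun {x}) ≤ κ.toFun (Prod.snd ⁻¹' A) := by
        have hm := κ.mono' {(x, y)} (Prod.snd ⁻¹' A) (singleton_subset_iff.2 hy)
        rw [hκ x y] at hm
        calc T.op s (ν₁.toFun {x}) = T.op (ν₁.toFun {x}) (ν₂.toFun {y}) := T.comm' _ _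
          _ ≤ κ.toFun (Prod.snd ⁻¹' A) := hm
      linarith
end
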